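/- Let U ⊆ A^{ℤ²} be an additive shift space that is block gluing, and let Ω = {Ω(n)}_{n≥1} be an expanding system of finite subsets of ℤ². If limsup_{n→∞} |∂Ω(n)|/|Ω(n)| = 0, then h_Ω(U) = h_r(U). -/

import Mathlib

open Filter
open scoped Classical

/-- The `m × n` rectangular lattice `Z_{m×n}(p)` with bottom-left corner `p`. -/
def Zrect (m n : ℕ) (p : ℤ × ℤ) : Finset (ℤ × ℤ) :=
  (Finset.range m ×ˢ Finset.range n).image (fun ab => (p.1 + (ab.1 : ℤ), p.2 + (ab.2 : ℤ)))

/-- The number of patterns of `U` seen on the finite window `L`. -/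
noncomputable def patternCount {A : Type*} (U : Set ((ℤ × ℤ) → A)) (L : Finset (ℤ × ℤ)) : ℕ :=
  Set.ncard ((fun x => fun p : L => x (p : ℤ × ℤ)) '' U)

/-- An additive shift space: nonempty, closed, translation invariant. -/
def IsShiftSpace {A : Type*} [TopologicalSpace A] (U : Set ((ℤ × ℤ) → A)) : Prop :=
  U.Nonempty ∧ IsClosed U ∧ ∀ v : ℤ × ℤ, ∀ x ∈ U, (fun p => x (p + v)) ∈ U

/-- An expanding system of finite sublattices of `ℤ²`. -/
def IsExpandingSystem (Ω : ℕ → Finset (ℤ × ℤ)) : Prop :=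
  (∀ n, Ω n ⊂ Ω (n + 1)) ∧ ∀ p : ℤ × ℤ, ∃ n, p ∈ Ω n

/-- The interior of a finite lattice. -/
def latInterior (L : Finset (ℤ × ℤ)) : Finset (ℤ × ℤ) :=
  L.filter (fun p => (p.1 + 1, p.2) ∈ L ∧ (p.1, p.2 + 1) ∈ L ∧ (p.1 + 1, p.2 + 1) ∈ L)

/-- The boundary of a finite lattice. -/
def latBoundary (L : Finset (ℤ × ℤ)) : Finset (ℤ × ℤ) := L \ latInterior L

/-- The rectangular entropy `h_r(U)`. -/
noncomputable def rectEntropy {A : Type*} (U : Set ((ℤ × ℤ) → A)) : ℝ :=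
  ⨅ mn : ℕ × ℕ, (1 / (((mn.1 + 1) * (mn.2 + 1) : ℕ) : ℝ)) *
    Real.log (patternCount U (Zrect (mn.1 + 1) (mn.2 + 1) (0, 0)))

/-- The entropy `h_Ω(U)` along an expanding system `Ω`. -/
noncomputable def entropyAlong {A : Type*} (U : Set ((ℤ × ℤ) → A)) (Ω : ℕ → Finset (ℤ × ℤ)) : ℝ :=
  Filter.limsup (fun n => (1 / ((Ω n).card : ℝ)) * Real.log (patternCount U (Ω n))) Filter.atTop

/-- `Ω_{k,l}(n)`: the union of grid rectangles `Z_{k×l}((ak,bl))` contained in `L`. -/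
noncomputable def gridPart (k l : ℕ) (L : Finset (ℤ × ℤ)) : Finset (ℤ × ℤ) :=
  L.filter (fun p => ∃ a b : ℤ,
    p ∈ Zrect k l ((k : ℤ) * a, (l : ℤ) * b) ∧ Zrect k l ((k : ℤ) * a, (l : ℤ) * b) ⊆ L)

/-- `β_{k,l}` : the size of the complement of the grid part. -/
noncomputable def betaKL (k l : ℕ) (L : Finset (ℤ × ℤ)) : ℕ := (L \ gridPart k l L).card

/-- `α_{k,l}` : the number of grid rectangles contained in `L`. -/
noncomputable def alphaKL (k l : ℕ) (L : Finset (ℤ × ℤ)) : ℕ :=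
  Set.ncard {ab : ℤ × ℤ | Zrect k l ((k : ℤ) * ab.1, (l : ℤ) * ab.2) ⊆ L}

/-- A tessellation of `ℤ²`. -/
def IsTessellation (T : Finset (ℤ × ℤ)) : Prop :=
  ∃ v : ℕ → ℤ × ℤ,
    (∀ i j : ℕ, i ≠ j → Disjoint (T.image (· + v i)) (T.image (· + v j))) ∧
    ∀ p : ℤ × ℤ, ∃ i : ℕ, p ∈ T.image (· + v i)

/-- Euclidean distance between points of `ℤ²`. -/
noncomputable def euclDist (p q : ℤ × ℤ) : ℝ :=
  Real.sqrt (((p.1 - q.1 : ℤ) : ℝ) ^ 2 + ((p.2 - q.2 : ℤ) : ℝ) ^ 2)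

/-- Block gluing with gap `M`. -/
def BlockGluingWithGap {A : Type*} (U : Set ((ℤ × ℤ) → A)) (M : ℕ) : Prop :=
  ∀ (m₁ n₁ m₂ n₂ : ℕ) (c₁ c₂ : ℤ × ℤ),
    (∀ p ∈ Zrect m₁ n₁ c₁, ∀ q ∈ Zrect m₂ n₂ c₂, (M : ℝ) ≤ euclDist p q) →
    ∀ x₁ ∈ U, ∀ x₂ ∈ U, ∃ x ∈ U,
      (∀ p ∈ Zrect m₁ n₁ c₁, x p = x₁ p) ∧ ∀ q ∈ Zrect m₂ n₂ c₂, x q = x₂ q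

/-- Block gluing. -/
def IsBlockGluing {A : Type*} (U : Set ((ℤ × ℤ) → A)) : Prop :=
  ∃ M : ℕ, 1 ≤ M ∧ BlockGluingWithGap U M

/-- A full shift on a sub-alphabet. -/
def IsFullShift {A : Type*} (U : Set ((ℤ × ℤ) → A)) : Prop :=
  ∃ B : Set A, U = {x | ∀ p : ℤ × ℤ, x p ∈ B}

/-- Shift of finite type. -/
def IsSFT {A : Type*} (U : Set ((ℤ × ℤ) → A)) : Prop :=
  ∃ (F : Finset (ℤ × ℤ)) (P : Set (F → A)),
    U = {x | ∀ v : ℤ × ℤ, (fun p : F => x (v + (p : ℤ × ℤ))) ∈ P}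

/-- `(i,j)` has horizontal length `m` in `L`. -/
def HasHorizLength (L : Finset (ℤ × ℤ)) (p : ℤ × ℤ) (m : ℕ) : Prop :=
  1 ≤ m ∧ (∃ c : ℤ × ℤ, p ∈ Zrect m 1 c ∧ Zrect m 1 c ⊆ L) ∧
    ∀ m' : ℕ, m < m' → ¬ ∃ c : ℤ × ℤ, p ∈ Zrect m' 1 c ∧ Zrect m' 1 c ⊆ L

/-- `(i,j)` has vertical length `m` in `L`. -/
def HasVertLength (L : Finset (ℤ × ℤ)) (p : ℤ × ℤ) (m : ℕ) : Prop :=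
  1 ≤ m ∧ (∃ c : ℤ × ℤ, p ∈ Zrect 1 m c ∧ Zrect 1 m c ⊆ L) ∧
    ∀ m' : ℕ, m < m' → ¬ ∃ c : ℤ × ℤ, p ∈ Zrect 1 m' c ∧ Zrect 1 m' c ⊆ L

noncomputable def betaHoriz (m : ℕ) (L : Finset (ℤ × ℤ)) : ℕ :=
  (L.filter (fun p => HasHorizLength L p m)).card

noncomputable def betaVert (m : ℕ) (L : Finset (ℤ × ℤ)) : ℕ :=
  (L.filter (fun p => HasVertLength L p m)).card

/-- The one-dimensional sublattice segment `{s • v : 0 ≤ s ≤ n-1}`. -/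
def lineSegment (v : ℤ × ℤ) (n : ℕ) : Finset (ℤ × ℤ) :=
  (Finset.range n).image (fun s : ℕ => ((s : ℤ) * v.1, (s : ℤ) * v.2))

/-- The projectional entropy along the one-dimensional sublattice generated by `v`. -/
noncomputable def projEntropy {A : Type*} (U : Set ((ℤ × ℤ) → A)) (v : ℤ × ℤ) : ℝ :=
  ⨅ n : ℕ, (1 / (n + 1 : ℝ)) * Real.log (patternCount U (lineSegment v (n + 1)))

/-- `ĥ⁽¹⁾(U)`: supremum of projectional entropies over one-dimensional sublattices. -/
noncomputable def hHatOne {A : Type*} (U : Set ((ℤ × ℤ) → A)) : ℝ :=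
  ⨆ v : {w : ℤ × ℤ // w ≠ 0}, projEntropy U (v : ℤ × ℤ)

/-- The horizontal golden-mean shift. -/
def goldenMeanShift : Set ((ℤ × ℤ) → Fin 2) :=
  {x | ∀ p : ℤ × ℤ, x p * x (p.1 + 1, p.2) = 0}

/-- The sequence `a_k`: `a_1 = 2`, `a_2 = 3`, `a_k = a_{k-1} + a_{k-2}`. -/
def aSeq : ℕ → ℕ
  | 0 => 1
  | 1 => 2
  | (k + 2) => aSeq (k + 1) + aSeq k


section Geometry

lemma mem_Zrect {m n : ℕ} {p q : ℤ × ℤ} :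
    q ∈ Zrect m n p ↔ p.1 ≤ q.1 ∧ q.1 < p.1 + m ∧ p.2 ≤ q.2 ∧ q.2 < p.2 + n := by
  constructor
  · rintro hq
    simp only [Zrect, Finset.mem_image, Finset.mem_product, Finset.mem_range] at hq
    obtain ⟨⟨a, b⟩, ⟨ha, hb⟩, rfl⟩ := hq
    simp only
    omega
  · rintro ⟨h1, h2, h3, h4⟩
    simp only [Zrect, Finset.mem_image, Finset.mem_product, Finset.mem_range]
    refine ⟨⟨(q.1 - p.1).toNat, (q.2 - p.2).toNat⟩, ⟨by omega, by omega⟩, ?_⟩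
    have : p.1 + ((q.1 - p.1).toNat : ℤ) = q.1 := by omega
    have : p.2 + ((q.2 - p.2).toNat : ℤ) = q.2 := by omega
    simp only
    ext <;> simp <;> omega

lemma Zrect_card (m n : ℕ) (p : ℤ × ℤ) : (Zrect m n p).card = m * n := by
  rw [Zrect, Finset.card_image_of_injOn, Finset.card_product, Finset.card_range,
    Finset.card_range]
  intro ⟨a, b⟩ ha ⟨c, d⟩ hc h
  simp only [Prod.mk.injEq] at h ⊢
  omega

lemma Zrect_eq_image (m n : ℕ) (p : ℤ × ℤ) :
    Zrect m n p = (Zrect m n (0, 0)).image (· + p) := by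
  ext q
  simp only [Finset.mem_image]
  constructor
  · intro hq
    rw [mem_Zrect] at hq
    refine ⟨q - p, ?_, by ring⟩
    rw [mem_Zrect]
    simp only [Prod.fst_sub, Prod.snd_sub]
    omega
  · rintro ⟨r, hr, rfl⟩
    rw [mem_Zrect] at hr ⊢
    simp only [Prod.fst_add, Prod.snd_add] at *
    omega

end Geometry
section Counting

variable {A : Type*} [Fintype A] (U : Set ((ℤ × ℤ) → A))

lemma patternSet_finite (L : Finset (ℤ × ℤ)) :
    (((fun x => fun p : L => x (p : ℤ × ℤ)) '' U)).Finite :=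
  Set.toFinite _

lemma patternCount_pos (hU : U.Nonempty) (L : Finset (ℤ × ℤ)) :
    1 ≤ patternCount U L := by
  rw [patternCount, Nat.one_le_iff_ne_zero, ← Nat.pos_iff_ne_zero, Set.ncard_pos (patternSet_finite U L)]
  exact hU.image _

lemma patternCount_le_pow (L : Finset (ℤ × ℤ)) :
    patternCount U L ≤ Fintype.card A ^ L.card := by
  classical
  calc patternCount U L ≤ (Set.univ : Set (L → A)).ncard :=
        Set.ncard_le_ncard (Set.subset_univ _) (Set.toFinite _)
    _ = Fintype.card (L → A) := by rw [Set.ncard_univ, Nat.card_eq_fintype_card]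
    _ = Fintype.card A ^ L.card := by
        rw [Fintype.card_fun]
        congr 1
        simp

lemma patternCount_mono {L L' : Finset (ℤ × ℤ)} (h : L ⊆ L') :
    patternCount U L ≤ patternCount U L' := by
  classical
  have : ((fun x => fun p : L => x (p : ℤ × ℤ)) '' U) =
      (fun (f : L' → A) => fun p : L => f ⟨(p : ℤ × ℤ), h p.2⟩) ''
        ((fun x => fun p : L' => x (p : ℤ × ℤ)) '' U) := by
    rw [Set.image_image]
  rw [patternCount, this]
  exact (Set.ncard_image_le (patternSet_finite U L')).trans le_rfl

lemma patternCount_union_le (L L' : Finset (ℤ × ℤ)) :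
    patternCount U (L ∪ L') ≤ patternCount U L * patternCount U L' := by
  classical
  set f : (↥(L ∪ L') → A) → (↥L → A) × (↥L' → A) := fun g =>
    (fun p => g ⟨p, Finset.mem_union_left _ p.2⟩, fun p => g ⟨p, Finset.mem_union_right _ p.2⟩)
    with hf
  have hinj : Function.Injective f := by
    intro g g' h
    funext ⟨p, hp⟩
    rcases Finset.mem_union.1 hp with h1 | h1
    · have := congrArg (fun z => z.1 ⟨p, h1⟩) h
      simpa using this
    · have := congrArg (fun z => z.2 ⟨p, h1⟩) h
      simpa using this
  calc patternCount U (L ∪ L')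
      = (f '' ((fun x => fun p : ↥(L ∪ L') => x (p : ℤ × ℤ)) '' U)).ncard := by
        rw [patternCount, Set.ncard_image_of_injective _ hinj]
    _ ≤ (((fun x => fun p : L => x (p : ℤ × ℤ)) '' U) ×ˢ
          ((fun x => fun p : L' => x (p : ℤ × ℤ)) '' U)).ncard := by
        apply Set.ncard_le_ncard _ (Set.toFinite _)
        rintro - ⟨-, ⟨x, hx, rfl⟩, rfl⟩
        exact ⟨⟨x, hx, rfl⟩, ⟨x, hx, rfl⟩⟩
    _ = patternCount U L * patternCount U L' := by
        rw [patternCount, patternCount, Set.ncard_eq_toFinset_card', Set.toFinset_prod,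
          Finset.card_product, Set.ncard_eq_toFinset_card', Set.ncard_eq_toFinset_card']

lemma patternCount_biUnion_le {ι : Type*} [DecidableEq ι] (s : Finset ι)
    (F : ι → Finset (ℤ × ℤ)) :
    patternCount U (s.biUnion F) ≤ ∏ i ∈ s, patternCount U (F i) := by
  classical
  induction s using Finset.induction with
  | empty =>
      simp only [Finset.biUnion_empty, Finset.prod_empty]
      calc patternCount U ∅ ≤ Fintype.card A ^ (∅ : Finset (ℤ×ℤ)).card := patternCount_le_pow U ∅
        _ = 1 := by simp
  | insert a s' hnotmem ih =>
      rw [Finset.biUnion_insert, Finset.prod_insert hnotmem]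
      exact (patternCount_union_le U _ _).trans (Nat.mul_le_mul le_rfl ih)

omit [Fintype A] in
lemma patternCount_translate (hU : ∀ v : ℤ × ℤ, ∀ x ∈ U, (fun p => x (p + v)) ∈ U)
    (L : Finset (ℤ × ℤ)) (v : ℤ × ℤ) :
    patternCount U (L.image (· + v)) = patternCount U L := by
  classical
  set Φ : (↥(L.image (· + v)) → A) → (↥L → A) := fun g =>
    (fun p => g ⟨(p : ℤ × ℤ) + v, Finset.mem_image_of_mem _ p.2⟩) with hΦ
  have hinj : Function.Injective Φ := by
    intro g g' h
    funext ⟨q, hq⟩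
    obtain ⟨p, hp, rfl⟩ := Finset.mem_image.1 hq
    have := congrArg (fun z => z ⟨p, hp⟩) h
    simpa using this
  have himg : Φ '' ((fun x => fun p : ↥(L.image (· + v)) => x (p : ℤ × ℤ)) '' U) =
      ((fun x => fun p : ↥L => x (p : ℤ × ℤ)) '' U) := by
    ext g
    constructor
    · rintro ⟨-, ⟨x, hx, rfl⟩, rfl⟩
      exact ⟨fun p => x (p + v), hU v x hx, rfl⟩
    · rintro ⟨y, hy, rfl⟩
      refine ⟨fun p : ↥(L.image (· + v)) => (fun q => y (q + -v)) (p : ℤ × ℤ), ?_, ?_⟩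
      · exact ⟨_, hU (-v) y hy, rfl⟩
      · funext p
        simp [hΦ]
  rw [patternCount, patternCount, ← himg, Set.ncard_image_of_injective _ hinj]

omit [Fintype A] in
lemma patternCount_Zrect_translate (hU : ∀ v : ℤ × ℤ, ∀ x ∈ U, (fun p => x (p + v)) ∈ U)
    (m n : ℕ) (p : ℤ × ℤ) :
    patternCount U (Zrect m n p) = patternCount U (Zrect m n (0, 0)) := by
  rw [Zrect_eq_image m n p, patternCount_translate U hU]

end Counting
section Cells

/-- index of the `k × k` grid cell containing `p` -/
def cdiv (k : ℕ) (p : ℤ × ℤ) : ℤ × ℤ := (p.1 / (k : ℤ), p.2 / (k : ℤ))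

/-- the `k × k` grid cell with index `i` -/
def cell (k : ℕ) (i : ℤ × ℤ) : Finset (ℤ × ℤ) := Zrect k k ((k : ℤ) * i.1, (k : ℤ) * i.2)

lemma mem_cell_cdiv {k : ℕ} (hk : 1 ≤ k) (p : ℤ × ℤ) : p ∈ cell k (cdiv k p) := by
  have hk' : (0 : ℤ) < (k : ℤ) := by exact_mod_cast hk
  have h1 := Int.mul_ediv_add_emod p.1 (k : ℤ)
  have h2 := Int.mul_ediv_add_emod p.2 (k : ℤ)
  have h3 := Int.emod_nonneg p.1 hk'.ne'
  have h4 := Int.emod_lt_of_pos p.1 hk'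
  have h5 := Int.emod_nonneg p.2 hk'.ne'
  have h6 := Int.emod_lt_of_pos p.2 hk'
  rw [cell, mem_Zrect]
  simp only [cdiv]
  constructor
  · omega
  constructor
  · omega
  constructor
  · omega
  · omega

lemma cdiv_eq_of_mem_cell {k : ℕ} (hk : 1 ≤ k) {i q : ℤ × ℤ} (hq : q ∈ cell k i) :
    cdiv k q = i := by
  have hk' : (0 : ℤ) < (k : ℤ) := by exact_mod_cast hk
  rw [cell, mem_Zrect] at hq
  have e1 : q.1 / (k : ℤ) = i.1 := by
    have : q.1 = (q.1 - (k : ℤ) * i.1) + (k : ℤ) * i.1 := by ring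
    rw [this, Int.add_mul_ediv_left _ _ hk'.ne', Int.ediv_eq_zero_of_lt (by omega) (by omega)]
    ring
  have e2 : q.2 / (k : ℤ) = i.2 := by
    have : q.2 = (q.2 - (k : ℤ) * i.2) + (k : ℤ) * i.2 := by ring
    rw [this, Int.add_mul_ediv_left _ _ hk'.ne', Int.ediv_eq_zero_of_lt (by omega) (by omega)]
    ring
  rw [cdiv, e1, e2]

lemma cell_card (k : ℕ) (i : ℤ × ℤ) : (cell k i).card = k ^ 2 := by
  rw [cell, Zrect_card]; ring

end Cells

section Crossing

/-- first variant of the 1-d crossing lemma -/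
lemma crossing_in_out (L : Finset (ℤ × ℤ)) (v : ℤ × ℤ) (a : ℤ × ℤ) (d : ℕ)
    (ha : a ∈ L) (hd : a + (d : ℤ) • v ∉ L) :
    ∃ j : ℕ, j < d ∧ a + (j : ℤ) • v ∈ L ∧ a + ((j : ℤ) + 1) • v ∉ L := by
  have hex : ∃ j : ℕ, a + (j : ℤ) • v ∉ L := ⟨d, hd⟩
  classical
  set j0 := Nat.find hex with hj0
  have hspec : a + (j0 : ℤ) • v ∉ L := Nat.find_spec hex
  have hj0d : j0 ≤ d := Nat.find_le hd
  have hj0pos : j0 ≠ 0 := by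
    intro h
    rw [h] at hspec
    simp at hspec
    exact hspec ha
  refine ⟨j0 - 1, by omega, ?_, ?_⟩
  · have := Nat.find_min hex (m := j0 - 1) (by omega)
    simpa using this
  · have : ((j0 - 1 : ℕ) : ℤ) + 1 = (j0 : ℤ) := by omega
    rw [this]
    exact hspec

/-- second variant of the 1-d crossing lemma -/
lemma crossing_out_in (L : Finset (ℤ × ℤ)) (v : ℤ × ℤ) (a : ℤ × ℤ) (d : ℕ)
    (ha : a ∉ L) (hd : a + (d : ℤ) • v ∈ L) :
    ∃ j : ℕ, j < d ∧ a + (j : ℤ) • v ∉ L ∧ a + ((j : ℤ) + 1) • v ∈ L := by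
  have hex : ∃ j : ℕ, a + (j : ℤ) • v ∈ L := ⟨d, hd⟩
  classical
  set j0 := Nat.find hex with hj0
  have hspec : a + (j0 : ℤ) • v ∈ L := Nat.find_spec hex
  have hj0d : j0 ≤ d := Nat.find_le hd
  have hj0pos : j0 ≠ 0 := by
    intro h
    rw [h] at hspec
    simp at hspec
    exact ha hspec
  refine ⟨j0 - 1, by omega, ?_, ?_⟩
  · exact Nat.find_min hex (m := j0 - 1) (by omega)
  · have : ((j0 - 1 : ℕ) : ℤ) + 1 = (j0 : ℤ) := by omega
    rw [this]
    exact hspec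

end Crossing

section Boundary

lemma mem_latBoundary_right {L : Finset (ℤ × ℤ)} {r : ℤ × ℤ} (hr : r ∈ L)
    (h : r + (1, 0) ∉ L) : r ∈ latBoundary L := by
  rw [latBoundary, Finset.mem_sdiff]
  refine ⟨hr, ?_⟩
  rw [latInterior, Finset.mem_filter]
  rintro ⟨-, h1, -, -⟩
  exact h (by convert h1 using 2 <;> simp)

lemma mem_latBoundary_up {L : Finset (ℤ × ℤ)} {r : ℤ × ℤ} (hr : r ∈ L)
    (h : r + (0, 1) ∉ L) : r ∈ latBoundary L := by
  rw [latBoundary, Finset.mem_sdiff]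
  refine ⟨hr, ?_⟩
  rw [latInterior, Finset.mem_filter]
  rintro ⟨-, -, h1, -⟩
  exact h (by convert h1 using 2 <;> simp)

lemma card_entry_le_card_exit (L : Finset (ℤ × ℤ)) (v : ℤ × ℤ) (hv : v ≠ 0) :
    ((L.image (· - v)).filter (fun u => u ∉ L)).card ≤
      (L.filter (fun r => r + v ∉ L)).card := by
  classical
  have key : ∀ a b : ℤ, a • v = b • v → a = b := by
    intro a b h
    have h3 : (a - b) • v = 0 := by rw [sub_smul, h, sub_self]
    have := smul_eq_zero.1 h3
    rcases this with h4 | h4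
    · omega
    · exact absurd h4 hv
  have hex : ∀ u : ℤ × ℤ, ∃ s : ℕ, u + ((s : ℤ) + 2) • v ∉ L := by
    intro u
    by_contra hcon
    push_neg at hcon
    have hinj : Function.Injective (fun s : ℕ => u + ((s : ℤ) + 2) • v) := by
      intro s s' h
      simp only [add_right_inj] at h
      have := key _ _ h
      omega
    have hinf : (Set.range (fun s : ℕ => u + ((s : ℤ) + 2) • v)).Infinite :=
      Set.infinite_range_of_injective hinj
    have hsub : (Set.range (fun s : ℕ => u + ((s : ℤ) + 2) • v)) ⊆ (L : Set (ℤ × ℤ)) := by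
      rintro - ⟨s, rfl⟩
      exact hcon s
    exact (hinf.mono hsub) L.finite_toSet
  set N : ℤ × ℤ → ℕ := fun u => Nat.find (hex u) with hN
  set f : ℤ × ℤ → ℤ × ℤ := fun u => u + ((N u : ℤ) + 1) • v with hf
  have hmem_between : ∀ u : ℤ × ℤ, u + v ∈ L → ∀ m : ℕ, 1 ≤ m → m ≤ N u + 1 →
      u + (m : ℤ) • v ∈ L := by
    intro u hu m hm1 hm2
    rcases Nat.lt_or_ge m 2 with h | h
    · have : m = 1 := by omega
      rw [this]
      simpa using hu
    · have hlt : m - 2 < N u := by omega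
      have := Nat.find_min (hex u) hlt
      simp only [not_not] at this
      have hcast : ((m - 2 : ℕ) : ℤ) + 2 = (m : ℤ) := by omega
      rwa [hcast] at this
  have hmaps : ∀ u ∈ (L.image (· - v)).filter (fun u => u ∉ L),
      f u ∈ L.filter (fun r => r + v ∉ L) := by
    intro u hu
    simp only [Finset.mem_filter, Finset.mem_image] at hu
    obtain ⟨⟨w, hw, hwu⟩, huL⟩ := hu
    have huv : u + v ∈ L := by
      have h1 : u + v = w := by rw [← hwu]; abel
      rwa [h1]
    simp only [Finset.mem_filter]
    constructor
    · exact hmem_between u huv (N u + 1) (by omega) (by push_cast; omega)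
    · have hspec := Nat.find_spec (hex u)
      have h2 : u + ((N u : ℤ) + 1) • v + v = u + ((N u : ℤ) + 2) • v := by
        have : ((N u : ℤ) + 2) • v = ((N u : ℤ) + 1) • v + v := by
          rw [show ((N u : ℤ) + 2) = ((N u : ℤ) + 1) + 1 by ring, add_smul, one_smul]
        rw [this, add_assoc]
      show u + ((N u : ℤ) + 1) • v + v ∉ L
      rw [h2]
      exact hspec
  apply Finset.card_le_card_of_injOn f hmaps
  intro u hu u' hu' hfe
  simp only [Finset.coe_filter, Set.mem_setOf_eq, Finset.mem_image] at hu hu'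
  obtain ⟨⟨w, hw, hwu⟩, huL⟩ := hu
  obtain ⟨⟨w', hw', hwu'⟩, huL'⟩ := hu'
  have huv : u + v ∈ L := by
    have h1 : u + v = w := by rw [← hwu]; abel
    rwa [h1]
  have huv' : u' + v ∈ L := by
    have h1 : u' + v = w' := by rw [← hwu']; abel
    rwa [h1]
  simp only [hf] at hfe
  by_contra hne
  rcases lt_trichotomy (N u) (N u') with hlt | heq | hlt
  · -- u = u' + t • v with t = N u' - N u ≥ 1, t ≤ N u' + 1, so u ∈ L : contradiction
    have h2 : u = u' + (((N u' : ℤ) + 1) - ((N u : ℤ) + 1)) • v := by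
      rw [sub_smul, ← sub_eq_iff_eq_add'.2 hfe.symm]
      abel
    have h3 : u = u' + ((N u' - N u : ℕ) : ℤ) • v := by
      have hc : (((N u' : ℤ) + 1) - ((N u : ℤ) + 1)) = ((N u' - N u : ℕ) : ℤ) := by omega
      rw [← hc]; exact h2
    have := hmem_between u' huv' (N u' - N u) (by omega) (by omega)
    rw [← h3] at this
    exact huL this
  · apply hne
    rw [heq] at hfe
    exact add_right_cancel hfe
  · have h2 : u' = u + (((N u : ℤ) + 1) - ((N u' : ℤ) + 1)) • v := by
      rw [sub_smul, ← sub_eq_iff_eq_add'.2 hfe]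
      abel
    have h3 : u' = u + ((N u - N u' : ℕ) : ℤ) • v := by
      have hc : (((N u : ℤ) + 1) - ((N u' : ℤ) + 1)) = ((N u - N u' : ℕ) : ℤ) := by omega
      rw [← hc]; exact h2
    have := hmem_between u huv (N u - N u') (by omega) (by omega)
    rw [← h3] at this
    exact huL' this

end Boundary

section BadCells

lemma add_smul_e1 (a : ℤ × ℤ) (j : ℤ) : a + j • ((1 : ℤ), (0 : ℤ)) = (a.1 + j, a.2) := by
  ext <;> simp

lemma add_smul_e2 (a : ℤ × ℤ) (j : ℤ) : a + j • ((0 : ℤ), (1 : ℤ)) = (a.1, a.2 + j) := by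
  ext <;> simp

lemma badcell_witness {k : ℕ} (hk : 1 ≤ k) (L : Finset (ℤ × ℤ)) (i : ℤ × ℤ)
    {p q : ℤ × ℤ} (hpL : p ∈ L) (hpc : p ∈ cell k i) (hqc : q ∈ cell k i) (hqL : q ∉ L) :
    ∃ r ∈ cell k i, r ∈ latBoundary L ∨
      (r ∉ L ∧ (r + (1, 0) ∈ L ∨ r + (0, 1) ∈ L)) := by
  rw [cell, mem_Zrect] at hpc hqc
  by_cases hm : ((q.1, p.2) : ℤ × ℤ) ∈ L
  · -- vertical crossing in the column of q
    rcases le_or_gt p.2 q.2 with hle | hlt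
    · obtain ⟨j, hj, h1, h2⟩ := crossing_in_out L (0, 1) (q.1, p.2) (q.2 - p.2).toNat hm
        (by rw [add_smul_e2]; simp only; rw [show p.2 + ((q.2 - p.2).toNat : ℤ) = q.2 by omega]
            simpa using hqL)
      rw [add_smul_e2] at h1 h2
      refine ⟨(q.1, p.2 + (j : ℤ)), ?_, Or.inl (mem_latBoundary_up h1 ?_)⟩
      · rw [cell, mem_Zrect]; simp only; omega
      · convert h2 using 2
        all_goals simp only [Prod.mk_add_mk, Prod.mk.injEq]
        all_goals omega
    · obtain ⟨j, hj, h1, h2⟩ := crossing_out_in L (0, 1) q (p.2 - q.2).toNat hqL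
        (by rw [add_smul_e2]; rw [show q.2 + ((p.2 - q.2).toNat : ℤ) = p.2 by omega]
            simpa using hm)
      rw [add_smul_e2] at h1 h2
      refine ⟨(q.1, q.2 + (j : ℤ)), ?_, Or.inr ⟨h1, Or.inr ?_⟩⟩
      · rw [cell, mem_Zrect]; simp only; omega
      · convert h2 using 2
        all_goals simp only [Prod.mk_add_mk, Prod.mk.injEq]
        all_goals omega
  · -- horizontal crossing in the row of p
    rcases le_or_gt p.1 q.1 with hle | hlt
    · obtain ⟨j, hj, h1, h2⟩ := crossing_in_out L (1, 0) p (q.1 - p.1).toNat hpL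
        (by rw [add_smul_e1]; rw [show p.1 + ((q.1 - p.1).toNat : ℤ) = q.1 by omega]
            simpa using hm)
      rw [add_smul_e1] at h1 h2
      refine ⟨(p.1 + (j : ℤ), p.2), ?_, Or.inl (mem_latBoundary_right h1 ?_)⟩
      · rw [cell, mem_Zrect]; simp only; omega
      · convert h2 using 2
        all_goals simp only [Prod.mk_add_mk, Prod.mk.injEq]
        all_goals omega
    · obtain ⟨j, hj, h1, h2⟩ := crossing_out_in L (1, 0) (q.1, p.2) (p.1 - q.1).toNat hm
        (by rw [add_smul_e1]; simp only; rw [show q.1 + ((p.1 - q.1).toNat : ℤ) = p.1 by omega]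
            simpa using hpL)
      rw [add_smul_e1] at h1 h2
      refine ⟨(q.1 + (j : ℤ), p.2), ?_, Or.inr ⟨h1, Or.inl ?_⟩⟩
      · rw [cell, mem_Zrect]; simp only; omega
      · convert h2 using 2
        all_goals simp only [Prod.mk_add_mk, Prod.mk.injEq]
        all_goals omega

lemma card_badpoints_le {k : ℕ} (hk : 1 ≤ k) (L : Finset (ℤ × ℤ)) :
    (L.filter (fun p => ¬ cell k (cdiv k p) ⊆ L)).card ≤
      3 * k ^ 2 * (latBoundary L).card := by
  classical
  set W : Finset (ℤ × ℤ) := latBoundary L ∪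
      ((L.image (· - ((1 : ℤ), (0 : ℤ)))).filter (fun u => u ∉ L)) ∪
      ((L.image (· - ((0 : ℤ), (1 : ℤ)))).filter (fun u => u ∉ L)) with hWdef
  have hW : W.card ≤ 3 * (latBoundary L).card := by
    have e1 : ((L.image (· - ((1 : ℤ), (0 : ℤ)))).filter (fun u => u ∉ L)).card ≤
        (latBoundary L).card := by
      refine (card_entry_le_card_exit L (1, 0) (by simp)).trans (Finset.card_le_card ?_)
      intro r hr
      rw [Finset.mem_filter] at hr
      exact mem_latBoundary_right hr.1 hr.2
    have e2 : ((L.image (· - ((0 : ℤ), (1 : ℤ)))).filter (fun u => u ∉ L)).card ≤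
        (latBoundary L).card := by
      refine (card_entry_le_card_exit L (0, 1) (by simp)).trans (Finset.card_le_card ?_)
      intro r hr
      rw [Finset.mem_filter] at hr
      exact mem_latBoundary_up hr.1 hr.2
    calc W.card ≤ (latBoundary L ∪
        ((L.image (· - ((1 : ℤ), (0 : ℤ)))).filter (fun u => u ∉ L))).card +
        ((L.image (· - ((0 : ℤ), (1 : ℤ)))).filter (fun u => u ∉ L)).card :=
          Finset.card_union_le _ _
      _ ≤ ((latBoundary L).card +
          ((L.image (· - ((1 : ℤ), (0 : ℤ)))).filter (fun u => u ∉ L)).card) +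
          ((L.image (· - ((0 : ℤ), (1 : ℤ)))).filter (fun u => u ∉ L)).card := by
            exact Nat.add_le_add_right (Finset.card_union_le _ _) _
      _ ≤ 3 * (latBoundary L).card := by omega
  set T : Finset (ℤ × ℤ) :=
    (L.filter (fun p => ¬ cell k (cdiv k p) ⊆ L)).image (cdiv k) with hTdef
  have hsub : (L.filter (fun p => ¬ cell k (cdiv k p) ⊆ L)) ⊆ T.biUnion (cell k) := by
    intro p hp
    rw [Finset.mem_biUnion]
    exact ⟨cdiv k p, Finset.mem_image_of_mem _ hp, mem_cell_cdiv hk p⟩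
  have hcard1 : (L.filter (fun p => ¬ cell k (cdiv k p) ⊆ L)).card ≤ T.card * k ^ 2 := by
    calc (L.filter (fun p => ¬ cell k (cdiv k p) ⊆ L)).card ≤ (T.biUnion (cell k)).card :=
          Finset.card_le_card hsub
      _ ≤ ∑ i ∈ T, (cell k i).card := Finset.card_biUnion_le
      _ = T.card * k ^ 2 := by
          rw [Finset.sum_congr rfl (fun i _ => cell_card k i), Finset.sum_const, smul_eq_mul]
  have hwit : ∀ i ∈ T, ∃ r, r ∈ cell k i ∧ r ∈ W := by
    intro i hi
    rw [hTdef, Finset.mem_image] at hi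
    obtain ⟨p, hp, rfl⟩ := hi
    rw [Finset.mem_filter] at hp
    obtain ⟨hpL, hpbad⟩ := hp
    obtain ⟨q, hqc, hqL⟩ := Finset.not_subset.1 hpbad
    obtain ⟨r, hrc, hr⟩ := badcell_witness hk L (cdiv k p) hpL (mem_cell_cdiv hk p) hqc hqL
    refine ⟨r, hrc, ?_⟩
    rw [hWdef]
    rcases hr with h | ⟨h1, h2 | h2⟩
    · exact Finset.mem_union_left _ (Finset.mem_union_left _ h)
    · refine Finset.mem_union_left _ (Finset.mem_union_right _ ?_)
      rw [Finset.mem_filter]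
      exact ⟨Finset.mem_image.2 ⟨r + (1, 0), h2, by abel⟩, h1⟩
    · refine Finset.mem_union_right _ ?_
      rw [Finset.mem_filter]
      exact ⟨Finset.mem_image.2 ⟨r + (0, 1), h2, by abel⟩, h1⟩
  have hTW : T.card ≤ W.card := by
    choose! w hw1 hw2 using hwit
    apply Finset.card_le_card_of_injOn w (fun i hi => hw2 i hi)
    intro i hi i' hi' he
    have e1 := cdiv_eq_of_mem_cell hk (hw1 i hi)
    have e2 := cdiv_eq_of_mem_cell hk (hw1 i' hi')
    rw [← e1, ← e2, he]
  calc (L.filter (fun p => ¬ cell k (cdiv k p) ⊆ L)).card ≤ T.card * k ^ 2 := hcard1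
    _ ≤ W.card * k ^ 2 := Nat.mul_le_mul_right _ hTW
    _ ≤ 3 * (latBoundary L).card * k ^ 2 := Nat.mul_le_mul_right _ hW
    _ = 3 * k ^ 2 * (latBoundary L).card := by ring

end BadCells

section Covering

open scoped BigOperators

lemma cell_disjoint {k : ℕ} (hk : 1 ≤ k) {i j : ℤ × ℤ} (hne : i ≠ j) :
    Disjoint (cell k i) (cell k j) := by
  rw [Finset.disjoint_left]
  intro x hxi hxj
  exact hne ((cdiv_eq_of_mem_cell hk hxi).symm.trans (cdiv_eq_of_mem_cell hk hxj))

lemma fullcells_card_le {k : ℕ} (hk : 1 ≤ k) (L : Finset (ℤ × ℤ)) :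
    ((L.image (cdiv k)).filter (fun i => cell k i ⊆ L)).card * k ^ 2 ≤ L.card := by
  classical
  set I := (L.image (cdiv k)).filter (fun i => cell k i ⊆ L) with hI
  have hsub : I.biUnion (cell k) ⊆ L := by
    intro x hx
    rw [Finset.mem_biUnion] at hx
    obtain ⟨i, hi, hxi⟩ := hx
    exact (Finset.mem_filter.1 hi).2 hxi
  have hcard : (I.biUnion (cell k)).card = I.card * k ^ 2 := by
    rw [Finset.card_biUnion (fun i _ j _ hne => cell_disjoint hk hne)]
    rw [Finset.sum_congr rfl (fun i _ => cell_card k i), Finset.sum_const, smul_eq_mul]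
  calc I.card * k ^ 2 = (I.biUnion (cell k)).card := hcard.symm
    _ ≤ L.card := Finset.card_le_card hsub

lemma card_le_fullcells {k : ℕ} (hk : 1 ≤ k) (L : Finset (ℤ × ℤ)) :
    L.card ≤ ((L.image (cdiv k)).filter (fun i => cell k i ⊆ L)).card * k ^ 2 +
      (L.filter (fun p => ¬ cell k (cdiv k p) ⊆ L)).card := by
  classical
  set I := (L.image (cdiv k)).filter (fun i => cell k i ⊆ L) with hI
  have hsub : L ⊆ I.biUnion (cell k) ∪ L.filter (fun p => ¬ cell k (cdiv k p) ⊆ L) := by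
    intro p hp
    rw [Finset.mem_union]
    by_cases hc : cell k (cdiv k p) ⊆ L
    · left
      rw [Finset.mem_biUnion]
      refine ⟨cdiv k p, ?_, mem_cell_cdiv hk p⟩
      rw [hI, Finset.mem_filter]
      exact ⟨Finset.mem_image_of_mem _ hp, hc⟩
    · right
      rw [Finset.mem_filter]
      exact ⟨hp, hc⟩
  calc L.card ≤ (I.biUnion (cell k) ∪ L.filter (fun p => ¬ cell k (cdiv k p) ⊆ L)).card :=
        Finset.card_le_card hsub
    _ ≤ (I.biUnion (cell k)).card + (L.filter (fun p => ¬ cell k (cdiv k p) ⊆ L)).card :=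
        Finset.card_union_le _ _
    _ ≤ I.card * k ^ 2 + (L.filter (fun p => ¬ cell k (cdiv k p) ⊆ L)).card := by
        refine Nat.add_le_add_right ?_ _
        calc (I.biUnion (cell k)).card ≤ ∑ i ∈ I, (cell k i).card := Finset.card_biUnion_le
          _ = I.card * k ^ 2 := by
              rw [Finset.sum_congr rfl (fun i _ => cell_card k i), Finset.sum_const,
                smul_eq_mul]

lemma patternCount_le_cells {A : Type*} [Fintype A] (U : Set ((ℤ × ℤ) → A))
    (hUs : ∀ v : ℤ × ℤ, ∀ x ∈ U, (fun p => x (p + v)) ∈ U) {k : ℕ} (hk : 1 ≤ k)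
    (L : Finset (ℤ × ℤ)) :
    patternCount U L ≤
      (patternCount U (Zrect k k (0, 0))) ^
          ((L.image (cdiv k)).filter (fun i => cell k i ⊆ L)).card *
        (Fintype.card A) ^ (L.filter (fun p => ¬ cell k (cdiv k p) ⊆ L)).card := by
  classical
  set I := L.image (cdiv k) with hI
  set If := I.filter (fun i => cell k i ⊆ L) with hIf
  set Ip := I.filter (fun i => ¬ cell k i ⊆ L) with hIp
  have hLeq : L = I.biUnion (fun i => cell k i ∩ L) := by
    apply Finset.Subset.antisymm
    · intro p hp
      rw [Finset.mem_biUnion]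
      exact ⟨cdiv k p, Finset.mem_image_of_mem _ hp,
        Finset.mem_inter.2 ⟨mem_cell_cdiv hk p, hp⟩⟩
    · intro p hp
      rw [Finset.mem_biUnion] at hp
      obtain ⟨i, -, hpi⟩ := hp
      exact (Finset.mem_inter.1 hpi).2
  have h1 : patternCount U L ≤ ∏ i ∈ I, patternCount U (cell k i ∩ L) := by
    conv_lhs => rw [hLeq]
    exact patternCount_biUnion_le U I _
  have hsplit : ∏ i ∈ I, patternCount U (cell k i ∩ L) =
      (∏ i ∈ If, patternCount U (cell k i ∩ L)) *
        ∏ i ∈ Ip, patternCount U (cell k i ∩ L) :=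
    (Finset.prod_filter_mul_prod_filter_not I _ _).symm
  have h2 : ∏ i ∈ If, patternCount U (cell k i ∩ L) ≤
      (patternCount U (Zrect k k (0, 0))) ^ If.card := by
    rw [← Finset.prod_const]
    apply Finset.prod_le_prod' 
    intro i hi
    have hfull : cell k i ∩ L = cell k i :=
      Finset.inter_eq_left.2 (Finset.mem_filter.1 hi).2
    rw [hfull, cell, patternCount_Zrect_translate U hUs]
  have h3 : ∏ i ∈ Ip, patternCount U (cell k i ∩ L) ≤
      (Fintype.card A) ^ (L.filter (fun p => ¬ cell k (cdiv k p) ⊆ L)).card := by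
    calc ∏ i ∈ Ip, patternCount U (cell k i ∩ L)
        ≤ ∏ i ∈ Ip, (Fintype.card A) ^ (cell k i ∩ L).card := by
          apply Finset.prod_le_prod'
          intro i hi
          exact patternCount_le_pow U _
      _ = (Fintype.card A) ^ (∑ i ∈ Ip, (cell k i ∩ L).card) := by
          rw [← Finset.prod_pow_eq_pow_sum]
      _ = (Fintype.card A) ^ (L.filter (fun p => ¬ cell k (cdiv k p) ⊆ L)).card := by
          congr 1
          have hbi : Ip.biUnion (fun i => cell k i ∩ L) =
              L.filter (fun p => ¬ cell k (cdiv k p) ⊆ L) := by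
            apply Finset.Subset.antisymm
            · intro p hp
              rw [Finset.mem_biUnion] at hp
              obtain ⟨i, hi, hpi⟩ := hp
              rw [Finset.mem_inter] at hpi
              have := cdiv_eq_of_mem_cell hk hpi.1
              rw [Finset.mem_filter]
              refine ⟨hpi.2, ?_⟩
              rw [this]
              exact (Finset.mem_filter.1 hi).2
            · intro p hp
              rw [Finset.mem_filter] at hp
              rw [Finset.mem_biUnion]
              refine ⟨cdiv k p, ?_, Finset.mem_inter.2 ⟨mem_cell_cdiv hk p, hp.1⟩⟩
              rw [hIp, Finset.mem_filter]
              exact ⟨Finset.mem_image_of_mem _ hp.1, hp.2⟩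
          rw [← hbi, Finset.card_biUnion]
          intro i hi j hj hne
          exact Finset.disjoint_of_subset_left (Finset.inter_subset_left)
            (Finset.disjoint_of_subset_right (Finset.inter_subset_left)
              (cell_disjoint hk hne))
  calc patternCount U L ≤ ∏ i ∈ I, patternCount U (cell k i ∩ L) := h1
    _ = _ * _ := hsplit
    _ ≤ _ := Nat.mul_le_mul h2 h3

end Covering

section Gluing

lemma euclDist_ge_fst {M : ℕ} {p q : ℤ × ℤ} (h : (M : ℤ) ≤ |p.1 - q.1|) :
    (M : ℝ) ≤ euclDist p q := by
  rw [euclDist]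
  have h1 : (M : ℝ) ≤ |((p.1 - q.1 : ℤ) : ℝ)| := by
    rw [← Int.cast_abs]
    exact_mod_cast h
  calc (M : ℝ) ≤ |((p.1 - q.1 : ℤ) : ℝ)| := h1
    _ = Real.sqrt (((p.1 - q.1 : ℤ) : ℝ) ^ 2) := (Real.sqrt_sq_eq_abs _).symm
    _ ≤ _ := Real.sqrt_le_sqrt (by nlinarith [sq_nonneg ((p.2 - q.2 : ℤ) : ℝ)])

lemma euclDist_ge_snd {M : ℕ} {p q : ℤ × ℤ} (h : (M : ℤ) ≤ |p.2 - q.2|) :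
    (M : ℝ) ≤ euclDist p q := by
  rw [euclDist]
  have h1 : (M : ℝ) ≤ |((p.2 - q.2 : ℤ) : ℝ)| := by
    rw [← Int.cast_abs]
    exact_mod_cast h
  calc (M : ℝ) ≤ |((p.2 - q.2 : ℤ) : ℝ)| := h1
    _ = Real.sqrt (((p.2 - q.2 : ℤ) : ℝ) ^ 2) := (Real.sqrt_sq_eq_abs _).symm
    _ ≤ _ := Real.sqrt_le_sqrt (by nlinarith [sq_nonneg ((p.1 - q.1 : ℤ) : ℝ)])

/-- inner squares fit in the bounding box of their index ranges -/
lemma square_subset_box (k K : ℕ) {a0 a1 b0 b1 : ℤ} (i : ℤ × ℤ)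
    (h1 : a0 ≤ i.1) (h2 : i.1 ≤ a1) (h3 : b0 ≤ i.2) (h4 : i.2 ≤ b1) :
    Zrect k k ((K : ℤ) * i.1, (K : ℤ) * i.2) ⊆
      Zrect ((K : ℤ) * (a1 - a0) + k).toNat ((K : ℤ) * (b1 - b0) + k).toNat
        ((K : ℤ) * a0, (K : ℤ) * b0) := by
  have hK : (0 : ℤ) ≤ (K : ℤ) := by positivity
  have hw : (0 : ℤ) ≤ (K : ℤ) * (a1 - a0) + k := by
    have := mul_nonneg hK (by omega : (0 : ℤ) ≤ a1 - a0)
    omega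
  have hh : (0 : ℤ) ≤ (K : ℤ) * (b1 - b0) + k := by
    have := mul_nonneg hK (by omega : (0 : ℤ) ≤ b1 - b0)
    omega
  intro q hq
  rw [mem_Zrect] at hq ⊢
  rw [Int.toNat_of_nonneg hw, Int.toNat_of_nonneg hh]
  simp only at hq ⊢
  have e1 : (K : ℤ) * a0 ≤ (K : ℤ) * i.1 := mul_le_mul_of_nonneg_left h1 hK
  have e2 : (K : ℤ) * i.1 ≤ (K : ℤ) * a1 := mul_le_mul_of_nonneg_left h2 hK
  have e3 : (K : ℤ) * b0 ≤ (K : ℤ) * i.2 := mul_le_mul_of_nonneg_left h3 hK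
  have e4 : (K : ℤ) * i.2 ≤ (K : ℤ) * b1 := mul_le_mul_of_nonneg_left h4 hK
  have e5 : (K : ℤ) * (a1 - a0) = (K : ℤ) * a1 - (K : ℤ) * a0 := mul_sub _ _ _
  have e6 : (K : ℤ) * (b1 - b0) = (K : ℤ) * b1 - (K : ℤ) * b0 := mul_sub _ _ _
  constructor
  · linarith [hq.1]
  constructor
  · linarith [hq.2.1]
  constructor
  · linarith [hq.2.2.1]
  · linarith [hq.2.2.2]

variable {A : Type*} {U : Set ((ℤ × ℤ) → A)} {M k : ℕ}

/-- gluing along one row of squares -/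
lemma glue_row (hbg : BlockGluingWithGap U M) (hne : U.Nonempty) (hM : 1 ≤ M)
    (b : ℤ) (T : Finset ℤ) :
    ∀ y : ℤ → ((ℤ × ℤ) → A), (∀ a ∈ T, y a ∈ U) →
      ∃ x ∈ U, ∀ a ∈ T, ∀ p ∈ Zrect k k (((k + M : ℕ) : ℤ) * a, ((k + M : ℕ) : ℤ) * b),
        x p = y a p := by
  induction T using Finset.induction_on_max with
  | empty =>
      intro y hy
      obtain ⟨x, hx⟩ := hne
      exact ⟨x, hx, by simp⟩
  | insert a s hmax ih =>
      intro y hy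
      have hyU : y a ∈ U := hy a (Finset.mem_insert_self a s)
      rcases Finset.eq_empty_or_nonempty s with rfl | hs
      · refine ⟨y a, hyU, ?_⟩
        intro c hc p hp
        rcases Finset.mem_insert.1 hc with rfl | h
        · rfl
        · simp at h
      · obtain ⟨x', hx', hreal⟩ := ih y (fun c hc => hy c (Finset.mem_insert_of_mem hc))
        set K : ℤ := ((k + M : ℕ) : ℤ) with hK
        set a0 := s.min' hs with ha0
        set a1 := s.max' hs with ha1
        have ha01 : a0 ≤ a1 := s.min'_le _ (s.max'_mem hs)
        have hdist : ∀ p ∈ Zrect (K * (a1 - a0) + k).toNat ((K * (b - b) + k).toNat)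
            (K * a0, K * b), ∀ q ∈ Zrect k k (K * a, K * b), (M : ℝ) ≤ euclDist p q := by
          intro p hp q hq
          apply euclDist_ge_fst
          rw [mem_Zrect] at hp hq
          have hw : (0 : ℤ) ≤ K * (a1 - a0) + k := by
            have := mul_nonneg (by positivity : (0:ℤ) ≤ K) (by omega : (0 : ℤ) ≤ a1 - a0)
            omega
          rw [Int.toNat_of_nonneg hw] at hp
          have ha1a : a1 + 1 ≤ a := by
            have := hmax a1 (s.max'_mem hs)
            omega
          have e1 : K * (a1 + 1) ≤ K * a :=
            mul_le_mul_of_nonneg_left ha1a (by positivity)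
          have e2 : K * (a1 - a0) = K * a1 - K * a0 := mul_sub _ _ _
          have e3 : K * (a1 + 1) = K * a1 + K := by ring
          have hMK : (M : ℤ) ≤ K := by rw [hK]; push_cast; omega
          have hp1 : p.1 ≤ K * a0 + (K * (a1 - a0) + k) - 1 := by
            have := hp.2.1
            simp only at this
            omega
          have hq1 : K * a ≤ q.1 := by
            have := hq.1
            simpa using this
          have hqp : (M : ℤ) ≤ q.1 - p.1 := by
            have hkK : (k : ℤ) + (M : ℤ) = K := by rw [hK]; push_cast; ring
            omega
          calc (M : ℤ) ≤ q.1 - p.1 := hqp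
            _ ≤ |q.1 - p.1| := le_abs_self _
            _ = |p.1 - q.1| := abs_sub_comm _ _
        obtain ⟨x, hxU, hag1, hag2⟩ := hbg (K * (a1 - a0) + k).toNat ((K * (b - b) + k).toNat)
          k k (K * a0, K * b) (K * a, K * b) hdist x' hx' (y a) hyU
        refine ⟨x, hxU, ?_⟩
        intro c hc p hp
        rcases Finset.mem_insert.1 hc with rfl | hcs
        · exact hag2 p hp
        · have hsub : Zrect k k (K * c, K * b) ⊆
              Zrect (K * (a1 - a0) + k).toNat ((K * (b - b) + k).toNat) (K * a0, K * b) := by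
            exact square_subset_box k (k + M) (c, b) (s.min'_le c hcs) (s.le_max' c hcs)
              le_rfl le_rfl
          rw [hag1 p (hsub hp)]
          exact hreal c hcs p hp

end Gluing

section Gluing2

variable {A : Type*} {U : Set ((ℤ × ℤ) → A)} {M k : ℕ}

/-- gluing arbitrary finite families of `M`-separated grid squares -/
lemma glue_many (hbg : BlockGluingWithGap U M) (hne : U.Nonempty) (hM : 1 ≤ M)
    (S : Finset (ℤ × ℤ)) (y : ℤ × ℤ → ((ℤ × ℤ) → A)) (hy : ∀ i ∈ S, y i ∈ U) :
    ∃ x ∈ U, ∀ i ∈ S, ∀ p ∈ Zrect k k (((k + M : ℕ) : ℤ) * i.1, ((k + M : ℕ) : ℤ) * i.2),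
      x p = y i p := by
  classical
  set K : ℤ := ((k + M : ℕ) : ℤ) with hK
  suffices H : ∀ T : Finset ℤ, ∀ S : Finset (ℤ × ℤ), S.image Prod.snd ⊆ T →
      ∀ y : ℤ × ℤ → ((ℤ × ℤ) → A), (∀ i ∈ S, y i ∈ U) →
      ∃ x ∈ U, ∀ i ∈ S, ∀ p ∈ Zrect k k (K * i.1, K * i.2), x p = y i p by
    exact H (S.image Prod.snd) S (le_refl _) y hy
  intro T
  induction T using Finset.induction_on_max with
  | empty =>
      intro S hS y hy
      obtain ⟨x, hx⟩ := hne
      refine ⟨x, hx, ?_⟩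
      intro i hi
      exact absurd (hS (Finset.mem_image_of_mem _ hi)) (by simp)
  | insert b T' hmax ih =>
      intro S hS y hy
      set Sb := S.filter (fun i => i.2 = b) with hSb
      set Sr := S.filter (fun i => i.2 ≠ b) with hSr
      have hSbsub : Sb ⊆ S := Finset.filter_subset _ _
      have hSrsub : Sr ⊆ S := Finset.filter_subset _ _
      have hSrT : Sr.image Prod.snd ⊆ T' := by
        intro c hc
        rw [Finset.mem_image] at hc
        obtain ⟨i, hi, rfl⟩ := hc
        rw [hSr, Finset.mem_filter] at hi
        have := hS (Finset.mem_image_of_mem _ hi.1)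
        rcases Finset.mem_insert.1 this with h | h
        · exact absurd h hi.2
        · exact h
      obtain ⟨xr, hxrU, hxr⟩ := ih Sr hSrT y (fun i hi => hy i (hSrsub hi))
      -- realize the row b
      obtain ⟨xb, hxbU, hxb⟩ := glue_row (M := M) (k := k) hbg hne hM b
        (Sb.image Prod.fst) (fun a => y (a, b)) (by
          intro a ha
          rw [Finset.mem_image] at ha
          obtain ⟨i, hi, rfl⟩ := ha
          have hib : i.2 = b := (Finset.mem_filter.1 hi).2
          have h2 : i = (i.1, b) := by rw [Prod.ext_iff]; exact ⟨rfl, hib⟩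
          show y (i.1, b) ∈ U
          rw [← h2]
          exact hy i (hSbsub hi))
      have hxb' : ∀ i ∈ Sb, ∀ p ∈ Zrect k k (K * i.1, K * i.2), xb p = y i p := by
        intro i hi p hp
        have hib : i.2 = b := (Finset.mem_filter.1 hi).2
        have h2 : i = (i.1, b) := by rw [Prod.ext_iff]; exact ⟨rfl, hib⟩
        rw [h2] at hp ⊢
        exact hxb i.1 (Finset.mem_image_of_mem _ hi) p (by exact hp)
      rcases Finset.eq_empty_or_nonempty Sr with hSre | hSrne
      · refine ⟨xb, hxbU, ?_⟩
        intro i hi p hp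
        by_cases hib : i.2 = b
        · exact hxb' i (Finset.mem_filter.2 ⟨hi, hib⟩) p hp
        · have hmem : i ∈ Sr := Finset.mem_filter.2 ⟨hi, hib⟩
          rw [hSre] at hmem
          simp at hmem
      rcases Finset.eq_empty_or_nonempty Sb with hSbe | hSbne
      · refine ⟨xr, hxrU, ?_⟩
        intro i hi p hp
        by_cases hib : i.2 = b
        · have hmem : i ∈ Sb := Finset.mem_filter.2 ⟨hi, hib⟩
          rw [hSbe] at hmem
          simp at hmem
        · exact hxr i (Finset.mem_filter.2 ⟨hi, hib⟩) p hp
      · -- both nonempty: glue the bounding boxes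
        set a0 := (Sr.image Prod.fst).min' (hSrne.image _) with ha0
        set a1 := (Sr.image Prod.fst).max' (hSrne.image _) with ha1
        set b0 := (Sr.image Prod.snd).min' (hSrne.image _) with hb0
        set b1 := (Sr.image Prod.snd).max' (hSrne.image _) with hb1
        set c0 := (Sb.image Prod.fst).min' (hSbne.image _) with hc0
        set c1 := (Sb.image Prod.fst).max' (hSbne.image _) with hc1
        have hb1b : b1 + 1 ≤ b := by
          have h1 : b1 ∈ T' := hSrT ((Sr.image Prod.snd).max'_mem _)
          have := hmax b1 h1
          omega
        have hdist : ∀ p ∈ Zrect (K * (a1 - a0) + k).toNat (K * (b1 - b0) + k).toNat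
            (K * a0, K * b0),
            ∀ q ∈ Zrect (K * (c1 - c0) + k).toNat ((K * (b - b) + k).toNat) (K * c0, K * b),
            (M : ℝ) ≤ euclDist p q := by
          intro p hp q hq
          apply euclDist_ge_snd
          rw [mem_Zrect] at hp hq
          have hh : (0 : ℤ) ≤ K * (b1 - b0) + k := by
            have hb01 : b0 ≤ b1 := Finset.min'_le _ _ ((Sr.image Prod.snd).max'_mem _)
            have := mul_nonneg (by positivity : (0 : ℤ) ≤ K) (by omega : (0 : ℤ) ≤ b1 - b0)
            omega
          rw [Int.toNat_of_nonneg hh] at hp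
          have e1 : K * (b1 + 1) ≤ K * b := mul_le_mul_of_nonneg_left hb1b (by positivity)
          have e2 : K * (b1 - b0) = K * b1 - K * b0 := mul_sub _ _ _
          have e3 : K * (b1 + 1) = K * b1 + K := by ring
          have hkK : (k : ℤ) + (M : ℤ) = K := by rw [hK]; push_cast; ring
          have hp2 : p.2 ≤ K * b0 + (K * (b1 - b0) + k) - 1 := by
            have := hp.2.2.2
            simp only at this
            omega
          have hq2 : K * b ≤ q.2 := by
            have := hq.2.2.1
            simpa using this
          have hqp : (M : ℤ) ≤ q.2 - p.2 := by omega
          calc (M : ℤ) ≤ q.2 - p.2 := hqp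
            _ ≤ |q.2 - p.2| := le_abs_self _
            _ = |p.2 - q.2| := abs_sub_comm _ _
        obtain ⟨x, hxU, hag1, hag2⟩ := hbg (K * (a1 - a0) + k).toNat (K * (b1 - b0) + k).toNat
          (K * (c1 - c0) + k).toNat ((K * (b - b) + k).toNat)
          (K * a0, K * b0) (K * c0, K * b) hdist xr hxrU xb hxbU
        refine ⟨x, hxU, ?_⟩
        intro i hi p hp
        by_cases hib : i.2 = b
        · have hiSb : i ∈ Sb := Finset.mem_filter.2 ⟨hi, hib⟩
          have hsub : Zrect k k (K * i.1, K * i.2) ⊆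
              Zrect (K * (c1 - c0) + k).toNat ((K * (b - b) + k).toNat) (K * c0, K * b) := by
            have h2 : i = (i.1, b) := by rw [Prod.ext_iff]; exact ⟨rfl, hib⟩
            rw [h2]
            exact square_subset_box k (k + M) (i.1, b)
              (by exact Finset.min'_le _ _ (Finset.mem_image_of_mem Prod.fst hiSb))
              (by exact Finset.le_max' _ _ (Finset.mem_image_of_mem Prod.fst hiSb))
              le_rfl le_rfl
          rw [hag2 p (hsub hp)]
          exact hxb' i hiSb p hp
        · have hiSr : i ∈ Sr := Finset.mem_filter.2 ⟨hi, hib⟩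
          have hsub : Zrect k k (K * i.1, K * i.2) ⊆
              Zrect (K * (a1 - a0) + k).toNat (K * (b1 - b0) + k).toNat (K * a0, K * b0) :=
            square_subset_box k (k + M) i
              (by exact Finset.min'_le _ _ (Finset.mem_image_of_mem Prod.fst hiSr))
              (by exact Finset.le_max' _ _ (Finset.mem_image_of_mem Prod.fst hiSr))
              (by exact Finset.min'_le _ _ (Finset.mem_image_of_mem Prod.snd hiSr))
              (by exact Finset.le_max' _ _ (Finset.mem_image_of_mem Prod.snd hiSr))
          rw [hag1 p (hsub hp)]
          exact hxr i hiSr p hp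

end Gluing2

section LowerCount

variable {A : Type*} [Fintype A] {U : Set ((ℤ × ℤ) → A)} {M k : ℕ}

lemma pow_le_patternCount_biUnion (hUs : ∀ v : ℤ × ℤ, ∀ x ∈ U, (fun p => x (p + v)) ∈ U)
    (hbg : BlockGluingWithGap U M) (hne : U.Nonempty) (hM : 1 ≤ M)
    (S : Finset (ℤ × ℤ)) :
    patternCount U (Zrect k k (0, 0)) ^ S.card ≤
      patternCount U (S.biUnion (fun i =>
        Zrect k k (((k + M : ℕ) : ℤ) * i.1, ((k + M : ℕ) : ℤ) * i.2))) := by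
  classical
  set K : ℤ := ((k + M : ℕ) : ℤ) with hK
  set R : ℤ × ℤ → Finset (ℤ × ℤ) := fun i => Zrect k k (K * i.1, K * i.2) with hR
  induction S using Finset.induction with
  | empty =>
      simpa using patternCount_pos U hne _
  | insert j S' hj ih =>
      rw [Finset.card_insert_of_notMem hj, Finset.biUnion_insert]
      set B' := S'.biUnion R with hB'
      set D := R j ∪ B' with hD
      have hBD : B' ⊆ D := Finset.subset_union_right
      have hRD : R j ⊆ D := Finset.subset_union_left
      set ψ : (↥D → A) → (↥B' → A) × (↥(R j) → A) := fun g =>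
        (fun p => g ⟨p, hBD p.2⟩, fun p => g ⟨p, hRD p.2⟩) with hψ
      have hsurj : (((fun x => fun p : ↥B' => x (p : ℤ × ℤ)) '' U) ×ˢ
          ((fun x => fun p : ↥(R j) => x (p : ℤ × ℤ)) '' U)) ⊆
          ψ '' ((fun x => fun p : ↥D => x (p : ℤ × ℤ)) '' U) := by
        rintro ⟨P, Q⟩ ⟨⟨xP, hxP, rfl⟩, ⟨xQ, hxQ, rfl⟩⟩
        have hyU : ∀ i ∈ insert j S',
            (fun i' : ℤ × ℤ => if i' = j then xQ else xP) i ∈ U := by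
          intro i hi
          by_cases h : i = j
          · simpa [h] using hxQ
          · simpa [h] using hxP
        obtain ⟨x, hxU, hreal⟩ := glue_many (M := M) (k := k) hbg hne hM (insert j S')
          (fun i' : ℤ × ℤ => if i' = j then xQ else xP) hyU
        refine ⟨_, ⟨x, hxU, rfl⟩, ?_⟩
        rw [hψ]
        simp only
        rw [Prod.ext_iff]
        constructor
        · funext p
          simp only
          obtain ⟨i, hi, hpi⟩ := Finset.mem_biUnion.1 p.2
          have hre := hreal i (Finset.mem_insert_of_mem hi) (p : ℤ × ℤ) hpi
          have hij : i ≠ j := fun h => hj (h ▸ hi)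
          rw [if_neg hij] at hre
          exact hre
        · funext p
          simp only
          have hre := hreal j (Finset.mem_insert_self j S') (p : ℤ × ℤ) p.2
          rw [if_pos rfl] at hre
          exact hre
      have hinj : Function.Injective ψ := by
        intro g g' h
        funext q
        rcases Finset.mem_union.1 q.2 with h1 | h1
        · have h2 := congrArg (fun z => z.2 ⟨(q : ℤ × ℤ), h1⟩) h
          simp only [hψ] at h2
          convert h2 using 2 <;> exact (Subtype.ext rfl)
        · have h2 := congrArg (fun z => z.1 ⟨(q : ℤ × ℤ), h1⟩) h
          simp only [hψ] at h2
          convert h2 using 2 <;> exact (Subtype.ext rfl)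
      have step1 : patternCount U B' * patternCount U (R j) ≤ patternCount U D := by
        calc patternCount U B' * patternCount U (R j)
            = (((fun x => fun p : ↥B' => x (p : ℤ × ℤ)) '' U) ×ˢ
              ((fun x => fun p : ↥(R j) => x (p : ℤ × ℤ)) '' U)).ncard := by
              rw [patternCount, patternCount,
                Set.ncard_eq_toFinset_card _ ((Set.toFinite _).prod (Set.toFinite _)),
                ← Set.Finite.toFinset_prod, Finset.card_product,
                Set.ncard_eq_toFinset_card _ (Set.toFinite _),
                Set.ncard_eq_toFinset_card _ (Set.toFinite _)]
          _ ≤ (ψ '' ((fun x => fun p : ↥D => x (p : ℤ × ℤ)) '' U)).ncard :=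
              Set.ncard_le_ncard hsurj (Set.toFinite _)
          _ = patternCount U D := by
              rw [patternCount, Set.ncard_image_of_injective _ hinj]
      have hRk : patternCount U (R j) = patternCount U (Zrect k k (0, 0)) := by
        rw [hR]
        exact patternCount_Zrect_translate U hUs k k _
      calc patternCount U (Zrect k k (0, 0)) ^ (S'.card + 1)
          = patternCount U (Zrect k k (0, 0)) ^ S'.card *
            patternCount U (Zrect k k (0, 0)) := by ring
        _ ≤ patternCount U B' * patternCount U (R j) := by
            rw [hRk]
            exact Nat.mul_le_mul_right _ ih
        _ ≤ patternCount U D := step1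

lemma innerSquare_subset_cell {k M : ℕ} (i : ℤ × ℤ) :
    Zrect k k (((k + M : ℕ) : ℤ) * i.1, ((k + M : ℕ) : ℤ) * i.2) ⊆ cell (k + M) i := by
  intro q hq
  rw [mem_Zrect] at hq
  rw [cell, mem_Zrect]
  simp only at hq ⊢
  push_cast at hq ⊢
  omega

lemma pow_fullcells_le_patternCount (hUs : ∀ v : ℤ × ℤ, ∀ x ∈ U, (fun p => x (p + v)) ∈ U)
    (hbg : BlockGluingWithGap U M) (hne : U.Nonempty) (hM : 1 ≤ M) (L : Finset (ℤ × ℤ)) :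
    patternCount U (Zrect k k (0, 0)) ^
        ((L.image (cdiv (k + M))).filter (fun i => cell (k + M) i ⊆ L)).card ≤
      patternCount U L := by
  classical
  set S := (L.image (cdiv (k + M))).filter (fun i => cell (k + M) i ⊆ L) with hS
  refine (pow_le_patternCount_biUnion hUs hbg hne hM S).trans (patternCount_mono U ?_)
  intro p hp
  rw [Finset.mem_biUnion] at hp
  obtain ⟨i, hi, hpi⟩ := hp
  exact (Finset.mem_filter.1 hi).2 (innerSquare_subset_cell i hpi)

end LowerCount

section Tiling

lemma sq_tile (m' n' : ℕ) (hm : 1 ≤ m') (hn : 1 ≤ n') :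
    Zrect (m' * n') (m' * n') ((0 : ℤ), (0 : ℤ)) =
      (Finset.range n' ×ˢ Finset.range m').biUnion
        (fun ab => Zrect m' n' ((m' : ℤ) * ab.1, (n' : ℤ) * ab.2)) := by
  classical
  ext q
  rw [mem_Zrect, Finset.mem_biUnion]
  constructor
  · rintro ⟨h1, h2, h3, h4⟩
    have hm' : (0 : ℤ) < (m' : ℤ) := by exact_mod_cast hm
    have hn' : (0 : ℤ) < (n' : ℤ) := by exact_mod_cast hn
    have d1 := Int.mul_ediv_add_emod q.1 (m' : ℤ)
    have d2 := Int.emod_nonneg q.1 hm'.ne'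
    have d3 := Int.emod_lt_of_pos q.1 hm'
    have d4 := Int.mul_ediv_add_emod q.2 (n' : ℤ)
    have d5 := Int.emod_nonneg q.2 hn'.ne'
    have d6 := Int.emod_lt_of_pos q.2 hn'
    have ha0 : 0 ≤ q.1 / (m' : ℤ) := Int.ediv_nonneg (by simpa using h1) hm'.le
    have hb0 : 0 ≤ q.2 / (n' : ℤ) := Int.ediv_nonneg (by simpa using h3) hn'.le
    have han : q.1 / (m' : ℤ) < (n' : ℤ) := by
      by_contra hcon
      push_neg at hcon
      have : (m' : ℤ) * (n' : ℤ) ≤ (m' : ℤ) * (q.1 / (m' : ℤ)) :=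
        mul_le_mul_of_nonneg_left hcon hm'.le
      simp only at h2
      push_cast at h2
      omega
    have hbm : q.2 / (n' : ℤ) < (m' : ℤ) := by
      by_contra hcon
      push_neg at hcon
      have : (n' : ℤ) * (m' : ℤ) ≤ (n' : ℤ) * (q.2 / (n' : ℤ)) :=
        mul_le_mul_of_nonneg_left hcon hn'.le
      simp only at h4
      push_cast at h4
      have hc : (m' : ℤ) * (n' : ℤ) = (n' : ℤ) * (m' : ℤ) := by ring
      omega
    refine ⟨((q.1 / (m' : ℤ)).toNat, (q.2 / (n' : ℤ)).toNat), ?_, ?_⟩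
    · rw [Finset.mem_product, Finset.mem_range, Finset.mem_range]
      constructor <;> omega
    · rw [mem_Zrect]
      simp only
      rw [Int.toNat_of_nonneg ha0, Int.toNat_of_nonneg hb0]
      omega
  · rintro ⟨⟨a, b⟩, hab, hq⟩
    rw [Finset.mem_product, Finset.mem_range, Finset.mem_range] at hab
    rw [mem_Zrect] at hq
    simp only at hq ⊢
    have hm0 : (0 : ℤ) ≤ (m' : ℤ) := by positivity
    have hn0 : (0 : ℤ) ≤ (n' : ℤ) := by positivity
    have e1 : (0 : ℤ) ≤ (m' : ℤ) * (a : ℤ) := by positivity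
    have e2 : (m' : ℤ) * ((a : ℤ) + 1) ≤ (m' : ℤ) * (n' : ℤ) :=
      mul_le_mul_of_nonneg_left (by exact_mod_cast hab.1) hm0
    have e3 : (0 : ℤ) ≤ (n' : ℤ) * (b : ℤ) := by positivity
    have e4 : (n' : ℤ) * ((b : ℤ) + 1) ≤ (n' : ℤ) * (m' : ℤ) :=
      mul_le_mul_of_nonneg_left (by exact_mod_cast hab.2) hn0
    have e5 : (m' : ℤ) * ((a : ℤ) + 1) = (m' : ℤ) * (a : ℤ) + m' := by ring
    have e6 : (n' : ℤ) * ((b : ℤ) + 1) = (n' : ℤ) * (b : ℤ) + n' := by ring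
    have e7 : (m' : ℤ) * (n' : ℤ) = (n' : ℤ) * (m' : ℤ) := by ring
    push_cast
    omega

lemma patternCount_sq_le_pow_rect {A : Type*} [Fintype A] (U : Set ((ℤ × ℤ) → A))
    (hUs : ∀ v : ℤ × ℤ, ∀ x ∈ U, (fun p => x (p + v)) ∈ U) (m' n' : ℕ)
    (hm : 1 ≤ m') (hn : 1 ≤ n') :
    patternCount U (Zrect (m' * n') (m' * n') ((0 : ℤ), (0 : ℤ))) ≤
      patternCount U (Zrect m' n' ((0 : ℤ), (0 : ℤ))) ^ (n' * m') := by
  classical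
  rw [sq_tile m' n' hm hn]
  calc patternCount U ((Finset.range n' ×ˢ Finset.range m').biUnion
        (fun ab => Zrect m' n' ((m' : ℤ) * ab.1, (n' : ℤ) * ab.2)))
      ≤ ∏ ab ∈ Finset.range n' ×ˢ Finset.range m',
          patternCount U (Zrect m' n' ((m' : ℤ) * ab.1, (n' : ℤ) * ab.2)) :=
        patternCount_biUnion_le U _ _
    _ = ∏ _ab ∈ Finset.range n' ×ˢ Finset.range m',
          patternCount U (Zrect m' n' ((0 : ℤ), (0 : ℤ))) := by
        apply Finset.prod_congr rfl
        intro ab _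
        exact patternCount_Zrect_translate U hUs m' n' _
    _ = patternCount U (Zrect m' n' ((0 : ℤ), (0 : ℤ))) ^ (n' * m') := by
        rw [Finset.prod_const, Finset.card_product, Finset.card_range, Finset.card_range]

end Tiling

section AnalyticUB

open Filter

variable {A : Type*} [Fintype A] {U : Set ((ℤ × ℤ) → A)} {Ω : ℕ → Finset (ℤ × ℤ)}

lemma f_nonneg (hne : U.Nonempty) (n : ℕ) :
    0 ≤ (1 / ((Ω n).card : ℝ)) * Real.log (patternCount U (Ω n)) := by
  apply mul_nonneg
  · positivity
  · apply Real.log_nonneg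
    exact_mod_cast patternCount_pos U hne (Ω n)

lemma f_le_logN (hne : U.Nonempty) (n : ℕ) :
    (1 / ((Ω n).card : ℝ)) * Real.log (patternCount U (Ω n)) ≤
      Real.log (Fintype.card A) := by
  have hA : Nonempty A := by
    obtain ⟨x, -⟩ := hne
    exact ⟨x (0, 0)⟩
  have hN : 1 ≤ (Fintype.card A : ℝ) := by exact_mod_cast Fintype.card_pos
  have hlogN : 0 ≤ Real.log (Fintype.card A) := Real.log_nonneg hN
  rcases Nat.eq_zero_or_pos (Ω n).card with h0 | hpos
  · rw [h0]
    simp [hlogN]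
  · have hc : (0 : ℝ) < ((Ω n).card : ℝ) := by exact_mod_cast hpos
    have h1 : Real.log (patternCount U (Ω n)) ≤ ((Ω n).card : ℝ) *
        Real.log (Fintype.card A) := by
      have h2 : (patternCount U (Ω n) : ℝ) ≤ ((Fintype.card A : ℝ)) ^ (Ω n).card := by
        have := patternCount_le_pow U (Ω n)
        exact_mod_cast this
      calc Real.log (patternCount U (Ω n)) ≤
          Real.log (((Fintype.card A : ℝ)) ^ (Ω n).card) := by
            apply Real.log_le_log _ h2
            exact_mod_cast patternCount_pos U hne (Ω n)
        _ = ((Ω n).card : ℝ) * Real.log (Fintype.card A) := by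
            rw [Real.log_pow]
    calc (1 / ((Ω n).card : ℝ)) * Real.log (patternCount U (Ω n)) ≤
        (1 / ((Ω n).card : ℝ)) * (((Ω n).card : ℝ) * Real.log (Fintype.card A)) := by
          apply mul_le_mul_of_nonneg_left h1
          positivity
      _ = Real.log (Fintype.card A) := by
          field_simp

lemma entropyAlong_le_sq (hne : U.Nonempty)
    (hUs : ∀ v : ℤ × ℤ, ∀ x ∈ U, (fun p => x (p + v)) ∈ U)
    (hrs : ∀ ε : ℝ, 0 < ε → ∀ᶠ n in atTop,
      ((latBoundary (Ω n)).card : ℝ) / ((Ω n).card : ℝ) < ε)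
    (hpos : ∀ᶠ n in atTop, 1 ≤ (Ω n).card)
    {k : ℕ} (hk : 1 ≤ k) :
    entropyAlong U Ω ≤
      (1 / (k : ℝ) ^ 2) * Real.log (patternCount U (Zrect k k (0, 0))) := by
  classical
  set N := Fintype.card A with hNdef
  have hA : Nonempty A := by
    obtain ⟨x, -⟩ := hne
    exact ⟨x (0, 0)⟩
  have hN : 1 ≤ (N : ℝ) := by exact_mod_cast Fintype.card_pos
  have hlogN : 0 ≤ Real.log N := Real.log_nonneg hN
  set Γk := patternCount U (Zrect k k (0, 0)) with hΓkdef
  have hΓk1 : 1 ≤ (Γk : ℝ) := by exact_mod_cast patternCount_pos U hne _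
  have hlogΓk : 0 ≤ Real.log Γk := Real.log_nonneg hΓk1
  have hcobdd : IsCoboundedUnder (· ≤ ·) atTop
      (fun n => (1 / ((Ω n).card : ℝ)) * Real.log (patternCount U (Ω n))) := by
    apply Filter.IsBoundedUnder.isCoboundedUnder_le
    exact ⟨0, Filter.eventually_map.2 (Filter.Eventually.of_forall (fun n => f_nonneg hne n))⟩
  apply le_of_forall_pos_le_add
  intro θ hθ
  set D : ℝ := 3 * (k : ℝ) ^ 2 * Real.log N with hD
  have hD0 : 0 ≤ D := by positivity
  set ε : ℝ := θ / (D + 1) with hε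
  have hε0 : 0 < ε := by positivity
  rw [entropyAlong]
  apply Filter.limsup_le_of_le hcobdd
  filter_upwards [hpos, hrs ε hε0] with n h1 h2
  set c : ℝ := ((Ω n).card : ℝ) with hc
  have hc1 : (1 : ℝ) ≤ c := by
    rw [hc]
    exact_mod_cast h1
  have hc0 : (0 : ℝ) < c := lt_of_lt_of_le one_pos hc1
  set al := (((Ω n).image (cdiv k)).filter (fun i => cell k i ⊆ Ω n)).card with hal
  set be := ((Ω n).filter (fun p => ¬ cell k (cdiv k p) ⊆ Ω n)).card with hbe
  have key1 := patternCount_le_cells U hUs hk (Ω n)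
  have key2 := fullcells_card_le hk (Ω n)
  have key3 := card_badpoints_le hk (Ω n)
  have hpcpos : (0 : ℝ) < (patternCount U (Ω n) : ℝ) := by
    have := patternCount_pos U hne (Ω n)
    exact_mod_cast Nat.lt_of_lt_of_le Nat.zero_lt_one this
  have hlog : Real.log (patternCount U (Ω n)) ≤
      (al : ℝ) * Real.log Γk + (be : ℝ) * Real.log N := by
    have hcast : (patternCount U (Ω n) : ℝ) ≤ (Γk : ℝ) ^ al * (N : ℝ) ^ be := by
      exact_mod_cast key1
    calc Real.log (patternCount U (Ω n)) ≤ Real.log ((Γk : ℝ) ^ al * (N : ℝ) ^ be) :=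
          Real.log_le_log hpcpos hcast
      _ = (al : ℝ) * Real.log Γk + (be : ℝ) * Real.log N := by
          rw [Real.log_mul (by positivity) (by positivity), Real.log_pow, Real.log_pow]
  have bound1 : (al : ℝ) / c ≤ 1 / (k : ℝ) ^ 2 := by
    rw [div_le_div_iff₀ hc0 (by positivity)]
    have hcast : (al : ℝ) * (k : ℝ) ^ 2 ≤ c := by
      rw [hc]
      exact_mod_cast key2
    linarith
  have bound2 : (be : ℝ) / c ≤ 3 * (k : ℝ) ^ 2 * ε := by
    have hβ : (be : ℝ) ≤ 3 * (k : ℝ) ^ 2 * ((latBoundary (Ω n)).card : ℝ) := by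
      exact_mod_cast key3
    calc (be : ℝ) / c ≤ (3 * (k : ℝ) ^ 2 * ((latBoundary (Ω n)).card : ℝ)) / c :=
          (div_le_div_iff_of_pos_right hc0).2 hβ
      _ = 3 * (k : ℝ) ^ 2 * (((latBoundary (Ω n)).card : ℝ) / c) := by ring
      _ ≤ 3 * (k : ℝ) ^ 2 * ε := mul_le_mul_of_nonneg_left h2.le (by positivity)
  have hεθ : 3 * (k : ℝ) ^ 2 * ε * Real.log N ≤ θ := by
    have h6 : D / (D + 1) ≤ 1 := by
      rw [div_le_one (by positivity)]
      linarith
    calc 3 * (k : ℝ) ^ 2 * ε * Real.log N = θ * (D / (D + 1)) := by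
          rw [hε, hD]
          ring
      _ ≤ θ * 1 := mul_le_mul_of_nonneg_left h6 hθ.le
      _ = θ := mul_one θ
  calc (1 / c) * Real.log (patternCount U (Ω n)) ≤
      (1 / c) * ((al : ℝ) * Real.log Γk + (be : ℝ) * Real.log N) :=
        mul_le_mul_of_nonneg_left hlog (by positivity)
    _ = ((al : ℝ) / c) * Real.log Γk + ((be : ℝ) / c) * Real.log N := by ring
    _ ≤ (1 / (k : ℝ) ^ 2) * Real.log Γk + (3 * (k : ℝ) ^ 2 * ε) * Real.log N :=
        add_le_add (mul_le_mul_of_nonneg_right bound1 hlogΓk)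
          (mul_le_mul_of_nonneg_right bound2 hlogN)
    _ ≤ (1 / (k : ℝ) ^ 2) * Real.log Γk + θ := by linarith

end AnalyticUB

section AnalyticLB

open Filter

variable {A : Type*} [Fintype A] {U : Set ((ℤ × ℤ) → A)} {Ω : ℕ → Finset (ℤ × ℤ)}

lemma sq_le_entropyAlong (hne : U.Nonempty)
    (hUs : ∀ v : ℤ × ℤ, ∀ x ∈ U, (fun p => x (p + v)) ∈ U)
    {M : ℕ} (hbgM : BlockGluingWithGap U M) (hM : 1 ≤ M)
    (hrs : ∀ ε : ℝ, 0 < ε → ∀ᶠ n in atTop,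
      ((latBoundary (Ω n)).card : ℝ) / ((Ω n).card : ℝ) < ε)
    (hpos : ∀ᶠ n in atTop, 1 ≤ (Ω n).card)
    {k : ℕ} (hk : 1 ≤ k) :
    (1 / ((k + M : ℕ) : ℝ) ^ 2) * Real.log (patternCount U (Zrect k k (0, 0))) ≤
      entropyAlong U Ω := by
  classical
  set Γk := patternCount U (Zrect k k (0, 0)) with hΓkdef
  have hΓk1 : 1 ≤ (Γk : ℝ) := by exact_mod_cast patternCount_pos U hne _
  have hlogΓk : 0 ≤ Real.log Γk := Real.log_nonneg hΓk1
  have hK1 : 1 ≤ k + M := by omega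
  have hKpos : (0 : ℝ) < ((k + M : ℕ) : ℝ) := by
    exact_mod_cast hK1
  have hbdd : IsBoundedUnder (· ≤ ·) atTop
      (fun n => (1 / ((Ω n).card : ℝ)) * Real.log (patternCount U (Ω n))) :=
    ⟨Real.log (Fintype.card A),
      Filter.eventually_map.2 (Filter.Eventually.of_forall (fun n => f_le_logN hne n))⟩
  apply le_of_forall_pos_le_add
  intro θ hθ
  set D : ℝ := 3 * Real.log Γk with hD
  have hD0 : 0 ≤ D := by positivity
  set ε : ℝ := θ / (D + 1) with hε
  have hε0 : 0 < ε := by positivity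
  have hev : ∀ᶠ n in atTop,
      (1 / ((k + M : ℕ) : ℝ) ^ 2 - 3 * ε) * Real.log Γk ≤
        (1 / ((Ω n).card : ℝ)) * Real.log (patternCount U (Ω n)) := by
    filter_upwards [hpos, hrs ε hε0] with n h1 h2
    set c : ℝ := ((Ω n).card : ℝ) with hc
    have hc1 : (1 : ℝ) ≤ c := by
      rw [hc]
      exact_mod_cast h1
    have hc0 : (0 : ℝ) < c := lt_of_lt_of_le one_pos hc1
    set al := (((Ω n).image (cdiv (k + M))).filter (fun i => cell (k + M) i ⊆ Ω n)).card
      with hal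
    set be := ((Ω n).filter (fun p => ¬ cell (k + M) (cdiv (k + M) p) ⊆ Ω n)).card with hbe
    have key1 : Γk ^ al ≤ patternCount U (Ω n) :=
      pow_fullcells_le_patternCount hUs hbgM hne hM (Ω n)
    have key2 : (Ω n).card ≤ al * (k + M) ^ 2 + be := card_le_fullcells hK1 (Ω n)
    have key3 : be ≤ 3 * (k + M) ^ 2 * (latBoundary (Ω n)).card :=
      card_badpoints_le hK1 (Ω n)
    have hpcpos : (0 : ℝ) < (patternCount U (Ω n) : ℝ) := by
      have := patternCount_pos U hne (Ω n)
      exact_mod_cast Nat.lt_of_lt_of_le Nat.zero_lt_one this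
    have hlog : (al : ℝ) * Real.log Γk ≤ Real.log (patternCount U (Ω n)) := by
      have hcast : ((Γk : ℝ)) ^ al ≤ (patternCount U (Ω n) : ℝ) := by
        exact_mod_cast key1
      calc (al : ℝ) * Real.log Γk = Real.log ((Γk : ℝ) ^ al) := (Real.log_pow _ _).symm
        _ ≤ Real.log (patternCount U (Ω n)) := Real.log_le_log (by positivity) hcast
    have bound1 : 1 / ((k + M : ℕ) : ℝ) ^ 2 - 3 * (((latBoundary (Ω n)).card : ℝ) / c) ≤
        (al : ℝ) / c := by
      have hc5 : c ≤ (al : ℝ) * ((k + M : ℕ) : ℝ) ^ 2 + (be : ℝ) := by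
        rw [hc]
        exact_mod_cast key2
      have hbe3 : (be : ℝ) ≤ 3 * ((k + M : ℕ) : ℝ) ^ 2 * ((latBoundary (Ω n)).card : ℝ) := by
        exact_mod_cast key3
      have h7 : 1 / ((k + M : ℕ) : ℝ) ^ 2 ≤
          ((al : ℝ) + 3 * ((latBoundary (Ω n)).card : ℝ)) / c := by
        rw [div_le_div_iff₀ (by positivity) hc0]
        nlinarith [hc5, hbe3]
      have h8 : ((al : ℝ) + 3 * ((latBoundary (Ω n)).card : ℝ)) / c =
          (al : ℝ) / c + 3 * (((latBoundary (Ω n)).card : ℝ) / c) := by ring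
      linarith
    have scalar : 1 / ((k + M : ℕ) : ℝ) ^ 2 - 3 * ε ≤ (al : ℝ) / c := by
      have : ((latBoundary (Ω n)).card : ℝ) / c ≤ ε := h2.le
      linarith
    calc (1 / ((k + M : ℕ) : ℝ) ^ 2 - 3 * ε) * Real.log Γk
        ≤ ((al : ℝ) / c) * Real.log Γk := mul_le_mul_of_nonneg_right scalar hlogΓk
      _ = (1 / c) * ((al : ℝ) * Real.log Γk) := by ring
      _ ≤ (1 / c) * Real.log (patternCount U (Ω n)) :=
          mul_le_mul_of_nonneg_left hlog (by positivity)
  have hlim : (1 / ((k + M : ℕ) : ℝ) ^ 2 - 3 * ε) * Real.log Γk ≤ entropyAlong U Ω := by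
    rw [entropyAlong]
    exact Filter.le_limsup_of_frequently_le hev.frequently hbdd
  have hεθ : 3 * ε * Real.log Γk ≤ θ := by
    have h6 : D / (D + 1) ≤ 1 := by
      rw [div_le_one (by positivity)]
      linarith
    calc 3 * ε * Real.log Γk = θ * (D / (D + 1)) := by
          rw [hε, hD]
          ring
      _ ≤ θ * 1 := mul_le_mul_of_nonneg_left h6 hθ.le
      _ = θ := mul_one θ
  have : (1 / ((k + M : ℕ) : ℝ) ^ 2) * Real.log Γk =
      (1 / ((k + M : ℕ) : ℝ) ^ 2 - 3 * ε) * Real.log Γk + 3 * ε * Real.log Γk := by ring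
  linarith

end AnalyticLB

/-- Theorem 1.2 / 3.3: for a block gluing shift space,
`limsup |∂Ω(n)|/|Ω(n)| = 0` implies `h_Ω(U) = h_r(U)`. -/
theorem entropyAlong_eq_rectEntropy_of_blockGluing {A : Type*} [Fintype A] [TopologicalSpace A]
    [DiscreteTopology A] (hcard : 2 ≤ Fintype.card A)
    (U : Set ((ℤ × ℤ) → A)) (hU : IsShiftSpace U) (hbg : IsBlockGluing U)
    (Ω : ℕ → Finset (ℤ × ℤ)) (hΩ : IsExpandingSystem Ω)
    (hbd : Filter.limsup
      (fun n => ((latBoundary (Ω n)).card : ℝ) / ((Ω n).card : ℝ)) Filter.atTop = 0) :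
    entropyAlong U Ω = rectEntropy U := by
  classical
  obtain ⟨hne, -, hUs⟩ := hU
  obtain ⟨M, hM, hbgM⟩ := hbg
  -- the cardinalities of the `Ω n` grow at least linearly
  have hcardmono : ∀ n, n ≤ (Ω n).card := by
    intro n
    induction n with
    | zero => exact Nat.zero_le _
    | succ n ih =>
        have := Finset.card_lt_card (hΩ.1 n)
        omega
  have hpos : ∀ᶠ n in Filter.atTop, 1 ≤ (Ω n).card := by
    rw [Filter.eventually_atTop]
    exact ⟨1, fun n hn => le_trans hn (hcardmono n)⟩
  -- the boundary ratios tend to zero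
  have hratio_le_one : ∀ n,
      ((latBoundary (Ω n)).card : ℝ) / ((Ω n).card : ℝ) ≤ 1 := by
    intro n
    apply div_le_one_of_le₀
    · exact_mod_cast Finset.card_le_card (Finset.sdiff_subset)
    · positivity
  have hrs : ∀ ε : ℝ, 0 < ε → ∀ᶠ n in Filter.atTop,
      ((latBoundary (Ω n)).card : ℝ) / ((Ω n).card : ℝ) < ε := by
    intro ε hε
    apply Filter.eventually_lt_of_limsup_lt
    · rw [hbd]
      exact hε
    · exact ⟨1, Filter.eventually_map.2 (Filter.Eventually.of_forall hratio_le_one)⟩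
  -- nonnegativity of the rectangular entropy terms
  have hterm0 : ∀ mn : ℕ × ℕ, 0 ≤ (1 / (((mn.1 + 1) * (mn.2 + 1) : ℕ) : ℝ)) *
      Real.log (patternCount U (Zrect (mn.1 + 1) (mn.2 + 1) (0, 0))) := by
    intro mn
    apply mul_nonneg
    · positivity
    · apply Real.log_nonneg
      exact_mod_cast patternCount_pos U hne _
  have hE0 : 0 ≤ rectEntropy U := le_ciInf hterm0
  have hbdd_below : BddBelow (Set.range (fun mn : ℕ × ℕ =>
      (1 / (((mn.1 + 1) * (mn.2 + 1) : ℕ) : ℝ)) *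
        Real.log (patternCount U (Zrect (mn.1 + 1) (mn.2 + 1) (0, 0))))) := by
    refine ⟨0, ?_⟩
    rintro - ⟨mn, rfl⟩
    exact hterm0 mn
  apply le_antisymm
  · -- upper bound : entropy along Ω is at most each rectangular term
    rw [rectEntropy]
    apply le_ciInf
    intro mn
    set m' := mn.1 + 1 with hm'
    set n' := mn.2 + 1 with hn'
    have hm : 1 ≤ m' := by omega
    have hn : 1 ≤ n' := by omega
    set k := m' * n' with hkdef
    have hk : 1 ≤ k := Nat.mul_pos hm hn
    have step1 : entropyAlong U Ω ≤
        (1 / (k : ℝ) ^ 2) * Real.log (patternCount U (Zrect k k (0, 0))) :=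
      entropyAlong_le_sq hne hUs hrs hpos hk
    have step2 : (1 / (k : ℝ) ^ 2) * Real.log (patternCount U (Zrect k k (0, 0))) ≤
        (1 / ((m' * n' : ℕ) : ℝ)) * Real.log (patternCount U (Zrect m' n' (0, 0))) := by
      have hΓ : (patternCount U (Zrect k k (0, 0)) : ℝ) ≤
          (patternCount U (Zrect m' n' (0, 0)) : ℝ) ^ (n' * m') := by
        exact_mod_cast patternCount_sq_le_pow_rect U hUs m' n' hm hn
      have hlog : Real.log (patternCount U (Zrect k k (0, 0))) ≤
          ((n' * m' : ℕ) : ℝ) * Real.log (patternCount U (Zrect m' n' (0, 0))) := by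
        calc Real.log (patternCount U (Zrect k k (0, 0))) ≤
            Real.log ((patternCount U (Zrect m' n' (0, 0)) : ℝ) ^ (n' * m')) := by
              apply Real.log_le_log _ hΓ
              have := patternCount_pos U hne (Zrect k k (0, 0))
              exact_mod_cast Nat.lt_of_lt_of_le Nat.zero_lt_one this
          _ = ((n' * m' : ℕ) : ℝ) * Real.log (patternCount U (Zrect m' n' (0, 0))) := by
              rw [Real.log_pow]
      have hkpos : (0 : ℝ) < (k : ℝ) := by exact_mod_cast hk
      calc (1 / (k : ℝ) ^ 2) * Real.log (patternCount U (Zrect k k (0, 0))) ≤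
          (1 / (k : ℝ) ^ 2) *
            (((n' * m' : ℕ) : ℝ) * Real.log (patternCount U (Zrect m' n' (0, 0)))) := by
            apply mul_le_mul_of_nonneg_left hlog
            positivity
        _ = (1 / ((m' * n' : ℕ) : ℝ)) * Real.log (patternCount U (Zrect m' n' (0, 0))) := by
            have hkr : (k : ℝ) = ((m' : ℝ)) * ((n' : ℝ)) := by
              rw [hkdef]
              push_cast
              ring
            have hm0 : (0 : ℝ) < (m' : ℝ) := by exact_mod_cast hm
            have hn0 : (0 : ℝ) < (n' : ℝ) := by exact_mod_cast hn
            have c2 : ((n' * m' : ℕ) : ℝ) = (n' : ℝ) * (m' : ℝ) := by push_cast; ring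
            rw [hkr, c2]
            field_simp
    exact step1.trans step2
  · -- lower bound
    apply le_of_forall_pos_le_add
    intro θ hθ
    obtain ⟨m0, hm0⟩ := exists_nat_gt (3 * (M : ℝ) * rectEntropy U / θ)
    set k := m0 + 1 with hkdef
    have hk : 1 ≤ k := by omega
    have hkR : (0 : ℝ) < (k : ℝ) := by exact_mod_cast hk
    have hkgt : 3 * (M : ℝ) * rectEntropy U / θ < (k : ℝ) := by
      calc 3 * (M : ℝ) * rectEntropy U / θ < (m0 : ℝ) := hm0
        _ ≤ (k : ℝ) := by exact_mod_cast Nat.le_succ m0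
    -- `k² E ≤ log Γk`
    have hEle : ((k : ℝ)) ^ 2 * rectEntropy U ≤
        Real.log (patternCount U (Zrect k k (0, 0))) := by
      have h1 : rectEntropy U ≤ (1 / (((m0 + 1) * (m0 + 1) : ℕ) : ℝ)) *
          Real.log (patternCount U (Zrect (m0 + 1) (m0 + 1) (0, 0))) := by
        rw [rectEntropy]
        exact ciInf_le hbdd_below (m0, m0)
      have h2 : (((m0 + 1) * (m0 + 1) : ℕ) : ℝ) = ((k : ℝ)) ^ 2 := by
        rw [hkdef]
        push_cast
        ring
      rw [h2] at h1
      have h3 := mul_le_mul_of_nonneg_left h1 (le_of_lt (by positivity : (0:ℝ) < (k:ℝ)^2))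
      calc ((k : ℝ)) ^ 2 * rectEntropy U ≤
          ((k : ℝ)) ^ 2 * ((1 / ((k : ℝ)) ^ 2) *
            Real.log (patternCount U (Zrect k k (0, 0)))) := h3
        _ = Real.log (patternCount U (Zrect k k (0, 0))) := by
            field_simp
    have step1 : (1 / ((k + M : ℕ) : ℝ) ^ 2) *
        Real.log (patternCount U (Zrect k k (0, 0))) ≤ entropyAlong U Ω :=
      sq_le_entropyAlong hne hUs hbgM hM hrs hpos hk
    have hKR : (0 : ℝ) < ((k + M : ℕ) : ℝ) := by
      have : 1 ≤ k + M := by omega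
      exact_mod_cast this
    have hKcast : ((k + M : ℕ) : ℝ) = (k : ℝ) + (M : ℝ) := by push_cast; ring
    have hMR : (1 : ℝ) ≤ (M : ℝ) := by exact_mod_cast hM
    -- (k²/K²) E ≤ entropyAlong
    have step2 : ((k : ℝ) ^ 2 / ((k + M : ℕ) : ℝ) ^ 2) * rectEntropy U ≤
        entropyAlong U Ω := by
      calc ((k : ℝ) ^ 2 / ((k + M : ℕ) : ℝ) ^ 2) * rectEntropy U
          = (1 / ((k + M : ℕ) : ℝ) ^ 2) * ((k : ℝ) ^ 2 * rectEntropy U) := by ring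
        _ ≤ (1 / ((k + M : ℕ) : ℝ) ^ 2) *
            Real.log (patternCount U (Zrect k k (0, 0))) := by
            apply mul_le_mul_of_nonneg_left hEle
            positivity
        _ ≤ entropyAlong U Ω := step1
    -- 1 - k²/K² ≤ 3M/k
    have hfrac : 1 - (k : ℝ) ^ 2 / ((k + M : ℕ) : ℝ) ^ 2 ≤ 3 * (M : ℝ) / (k : ℝ) := by
      rw [hKcast]
      have hKpos : (0 : ℝ) < ((k : ℝ) + (M : ℝ)) := by linarith
      rw [sub_le_iff_le_add]
      have key : (((k : ℝ) + (M : ℝ)) ^ 2 - (k : ℝ) ^ 2) / ((k : ℝ) + (M : ℝ)) ^ 2 ≤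
          3 * (M : ℝ) / (k : ℝ) := by
        rw [div_le_div_iff₀ (by positivity) hkR]
        have hM0 : (0 : ℝ) ≤ (M : ℝ) := by linarith
        have hk0 : (0 : ℝ) ≤ (k : ℝ) := hkR.le
        nlinarith [mul_nonneg hM0 (sq_nonneg (k : ℝ)), mul_nonneg hk0 (sq_nonneg (M : ℝ)),
          pow_nonneg hM0 3, mul_nonneg (mul_nonneg hM0 hM0) hM0]
      have expand : 1 = (((k : ℝ) + (M : ℝ)) ^ 2 - (k : ℝ) ^ 2) / ((k : ℝ) + (M : ℝ)) ^ 2 +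
          (k : ℝ) ^ 2 / ((k : ℝ) + (M : ℝ)) ^ 2 := by
        field_simp
        ring
      linarith
    -- conclude
    have hfinal : rectEntropy U ≤ entropyAlong U Ω + (3 * (M : ℝ) / (k : ℝ)) * rectEntropy U := by
      have h4 : (1 - (k : ℝ) ^ 2 / ((k + M : ℕ) : ℝ) ^ 2) * rectEntropy U ≤
          (3 * (M : ℝ) / (k : ℝ)) * rectEntropy U :=
        mul_le_mul_of_nonneg_right hfrac hE0
      have h5 : rectEntropy U = ((k : ℝ) ^ 2 / ((k + M : ℕ) : ℝ) ^ 2) * rectEntropy U +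
          (1 - (k : ℝ) ^ 2 / ((k + M : ℕ) : ℝ) ^ 2) * rectEntropy U := by ring
      linarith
    have hlast : (3 * (M : ℝ) / (k : ℝ)) * rectEntropy U ≤ θ := by
      have h6 : 3 * (M : ℝ) * rectEntropy U < (k : ℝ) * θ := by
        rw [div_lt_iff₀ hθ] at hkgt
        linarith
      rw [div_mul_eq_mul_div, div_le_iff₀ hkR]
      linarith
    linarith
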